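/- arXiv:2009.12290 — 4 statements merged into one kernel-verified Lean document; each statement's English description precedes it below -/
import Mathlib

section
/- Let A be an n×n irreducible completely positive matrix, n ≥ 2, whose graph is triangle free, and suppose the comparison matrix M(A) is nonsingular. Then A has at least two distinct minimal CP factorizations. -/
open Matrix

/-- A CP representation of `A`: a multiset of nonnegative, nonzero, pairwise linearly
independent vectors whose rank-one outer products sum to `A`. Counted as a multiset,
i.e. up to reordering of the summands (columns). -/
def IsCPRep {n : ℕ} (A : Matrix (Fin n) (Fin n) ℝ) (L : Multiset (Fin n → ℝ)) : Prop :=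
  (∀ b ∈ L, ∀ i, 0 ≤ b i) ∧ (∀ b ∈ L, b ≠ 0) ∧
  L.Pairwise (fun b c => LinearIndependent ℝ ![b, c]) ∧
  (L.map fun b => vecMulVec b b).sum = A

/-- `A` is completely positive. -/
def IsCP {n : ℕ} (A : Matrix (Fin n) (Fin n) ℝ) : Prop := ∃ L, IsCPRep A L

/-- The cp-rank: minimal number of rank-one summands in a CP representation. -/
noncomputable def cpRank {n : ℕ} (A : Matrix (Fin n) (Fin n) ℝ) : ℕ :=
  sInf {k | ∃ L, IsCPRep A L ∧ Multiset.card L = k}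

/-- A minimal CP representation: a CP representation with `cpRank A` summands. -/
def IsMinCPRep {n : ℕ} (A : Matrix (Fin n) (Fin n) ℝ) (L : Multiset (Fin n → ℝ)) : Prop :=
  IsCPRep A L ∧ Multiset.card L = cpRank A

/-- The graph of a symmetric matrix: `i ~ j` iff `i ≠ j` and `A i j ≠ 0`. -/
def matGraph {n : ℕ} (A : Matrix (Fin n) (Fin n) ℝ) : SimpleGraph (Fin n) where
  Adj i j := i ≠ j ∧ (A i j ≠ 0 ∨ A j i ≠ 0)
  symm := ⟨fun _ _ h => ⟨h.1.symm, h.2.symm⟩⟩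
  loopless := ⟨fun _ h => h.1 rfl⟩

/-- The comparison matrix `M(A)`. -/
noncomputable def compMatrix {n : ℕ} (A : Matrix (Fin n) (Fin n) ℝ) : Matrix (Fin n) (Fin n) ℝ :=
  fun i j => if i = j then |A i j| else -|A i j|

namespace CPAux

variable {n : ℕ}

/-- the pair relation -/
def R (b c : Fin n → ℝ) : Prop := LinearIndependent ℝ ![b, c]

lemma R_symm : Symmetric (R (n := n)) := by
  intro b c h
  rw [R, LinearIndependent.pair_iff] at h ⊢
  intro s t hst
  have := h t s (by rw [add_comm]; exact hst)
  exact ⟨this.2, this.1⟩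

lemma R_irrefl (b : Fin n → ℝ) : ¬ R b b := by
  rw [R, LinearIndependent.pair_iff]
  intro h
  have := h 1 (-1) (by simp)
  simp at this

lemma R_ne {b c : Fin n → ℝ} (h : R b c) : b ≠ c := by
  rintro rfl; exact R_irrefl b h

lemma pair_indep {b c : Fin n → ℝ} {p : Fin n} (hb : b p ≠ 0) (hc : c p = 0) (hc0 : c ≠ 0) :
    R b c := by
  rw [R, LinearIndependent.pair_iff]
  intro s t hst
  have h1 : s * b p + t * c p = 0 := by
    have := congrFun hst p
    simpa using this
  rw [hc, mul_zero, add_zero] at h1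
  have hs : s = 0 := by
    rcases mul_eq_zero.1 h1 with h | h
    · exact h
    · exact absurd h hb
  subst hs
  rw [zero_smul, zero_add] at hst
  rcases smul_eq_zero.1 hst with h | h
  · exact ⟨rfl, h⟩
  · exact absurd h hc0

lemma pairwise_iff {M : Multiset (Fin n → ℝ)} :
    M.Pairwise (R (n := n)) ↔ M.Nodup ∧ ∀ b ∈ M, ∀ c ∈ M, b ≠ c → R b c := by
  constructor
  · rintro ⟨l, rfl, hp⟩
    constructor
    · exact Multiset.coe_nodup.2 (hp.imp (fun h => R_ne h))
    · intro b hb c hc hbc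
      haveI : Std.Symm (R (n := n)) := ⟨fun _ _ h => R_symm h⟩
      exact hp.forall (by simpa using hb) (by simpa using hc) hbc
  · rintro ⟨hnd, hall⟩
    obtain ⟨l, hl⟩ := Quotient.exists_rep M
    subst hl
    refine ⟨l, rfl, ?_⟩
    replace hnd : l.Nodup := hnd
    induction l with
    | nil => exact List.Pairwise.nil
    | cons a l ih =>
      rw [List.nodup_cons] at hnd
      have hall' : ∀ b ∈ (l : Multiset (Fin n → ℝ)), ∀ c ∈ (l : Multiset (Fin n → ℝ)), b ≠ c → R b c := by
        intro b hb c hc h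
        exact hall b (by simp only [Multiset.quot_mk_to_coe, Multiset.mem_coe, List.mem_cons]; right; simpa using hb) c (by simp only [Multiset.quot_mk_to_coe, Multiset.mem_coe, List.mem_cons]; right; simpa using hc) h
      refine List.Pairwise.cons (fun c hc => ?_) (ih hall' hnd.2)
      refine hall a (by simp) c (by simp only [Multiset.quot_mk_to_coe, Multiset.mem_coe, List.mem_cons]; right; exact hc) (fun h => hnd.1 (h ▸ hc))

lemma sum_apply (M : Multiset (Fin n → ℝ)) (p q : Fin n) :
    (M.map fun b => vecMulVec b b).sum p q = (M.map fun b => b p * b q).sum := by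
  induction M using Multiset.induction_on with
  | empty => simp [Matrix.zero_apply]
  | cons a s ih =>
    simp only [Multiset.map_cons, Multiset.sum_cons]
    rw [Matrix.add_apply, ih, vecMulVec_apply]



section Rep
variable {A : Matrix (Fin n) (Fin n) ℝ} {L : Multiset (Fin n → ℝ)}

lemma entry (h : IsCPRep A L) (p q : Fin n) :
    A p q = (L.map fun b => b p * b q).sum := by
  rw [← h.2.2.2, sum_apply]

lemma entry_nonneg (h : IsCPRep A L) (p q : Fin n) : 0 ≤ A p q := by
  rw [entry h]
  apply Multiset.sum_nonneg
  intro x hx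
  obtain ⟨b, hb, rfl⟩ := Multiset.mem_map.1 hx
  exact mul_nonneg (h.1 b hb p) (h.1 b hb q)

lemma entry_symm (h : IsCPRep A L) (p q : Fin n) : A p q = A q p := by
  rw [entry h, entry h]
  congr 1
  exact Multiset.map_congr rfl (fun b _ => mul_comm _ _)

lemma term_le (h : IsCPRep A L) {b : Fin n → ℝ} (hb : b ∈ L) (p q : Fin n) :
    b p * b q ≤ A p q := by
  rw [entry h]
  apply Multiset.single_le_sum
  · intro x hx
    obtain ⟨c, hc, rfl⟩ := Multiset.mem_map.1 hx
    exact mul_nonneg (h.1 c hc p) (h.1 c hc q)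
  · exact Multiset.mem_map.2 ⟨b, hb, rfl⟩

lemma exists_pos_term (h : IsCPRep A L) {p q : Fin n} (hpq : 0 < A p q) :
    ∃ b ∈ L, 0 < b p * b q := by
  by_contra hc
  push_neg at hc
  have : A p q = 0 := by
    rw [entry h]
    apply Multiset.sum_eq_zero
    intro x hx
    obtain ⟨b, hb, rfl⟩ := Multiset.mem_map.1 hx
    exact le_antisymm (hc b hb) (mul_nonneg (h.1 b hb p) (h.1 b hb q))
  linarith


lemma vec_pos (h : IsCPRep A L) {b : Fin n → ℝ} (hb : b ∈ L) {i : Fin n} (hi : b i ≠ 0) :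
    0 < b i := lt_of_le_of_ne (h.1 b hb i) (Ne.symm hi)

lemma adj_of_pos (h : IsCPRep A L) {i j : Fin n} (hij : i ≠ j) (hpos : 0 < A i j) :
    (matGraph A).Adj i j := ⟨hij, Or.inl (ne_of_gt hpos)⟩

lemma entry_pos_of_term (h : IsCPRep A L) {b : Fin n → ℝ} (hb : b ∈ L) {i j : Fin n}
    (hi : b i ≠ 0) (hj : b j ≠ 0) : 0 < A i j :=
  lt_of_lt_of_le (mul_pos (vec_pos h hb hi) (vec_pos h hb hj)) (term_le h hb i j)

lemma supp_two (htf : (matGraph A).CliqueFree 3) (h : IsCPRep A L) {b : Fin n → ℝ}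
    (hb : b ∈ L) {i j p : Fin n} (hi : b i ≠ 0) (hj : b j ≠ 0) (hij : i ≠ j)
    (hpi : p ≠ i) (hpj : p ≠ j) : b p = 0 := by
  by_contra hp
  have h1 : (matGraph A).Adj i j := adj_of_pos h hij (entry_pos_of_term h hb hi hj)
  have h2 : (matGraph A).Adj i p := adj_of_pos h (Ne.symm hpi) (entry_pos_of_term h hb hi hp)
  have h3 : (matGraph A).Adj j p := adj_of_pos h (Ne.symm hpj) (entry_pos_of_term h hb hj hp)
  exact htf {i, j, p} (SimpleGraph.is3Clique_triple_iff.2 ⟨h1, h2, h3⟩)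

end Rep

section Merge

variable {A : Matrix (Fin n) (Fin n) ℝ}

lemma smul_outer (x : ℝ) (c : Fin n → ℝ) :
    vecMulVec (x • c) (x • c) = (x * x) • vecMulVec c c := by
  ext p q
  simp [vecMulVec_apply, Matrix.smul_apply, smul_eq_mul]
  ring

lemma collinear_of_not_R {b c : Fin n → ℝ} (hb0 : b ≠ 0) (hc0 : c ≠ 0)
    (hbn : ∀ i, 0 ≤ b i) (hcn : ∀ i, 0 ≤ c i) (h : ¬ R b c) :
    ∃ w : ℝ, 0 < w ∧ b = w • c := by
  rw [R, LinearIndependent.pair_iff] at h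
  push_neg at h
  obtain ⟨s, t, hst, hne⟩ := h
  rcases eq_or_ne s 0 with rfl | hs
  · rw [zero_smul, zero_add] at hst
    rcases smul_eq_zero.1 hst with ht | hc
    · exact absurd ht (hne rfl)
    · exact absurd hc hc0
  · have hbw : b = (-(t/s)) • c := by
      have h1 : s • b = -(t • c) := eq_neg_of_add_eq_zero_left hst
      calc b = s⁻¹ • (s • b) := by rw [smul_smul, inv_mul_cancel₀ hs, one_smul]
      _ = s⁻¹ • (-(t • c)) := by rw [h1]
      _ = (-(t/s)) • c := by rw [smul_neg, smul_smul, neg_smul, div_eq_inv_mul]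
    obtain ⟨p, hp⟩ : ∃ p, c p ≠ 0 := by
      by_contra hcp
      push_neg at hcp
      exact hc0 (funext hcp)
    have hcp : 0 < c p := lt_of_le_of_ne (hcn p) (Ne.symm hp)
    have hw0 : (-(t/s)) ≠ 0 := by
      rintro hw
      rw [hw, zero_smul] at hbw
      exact hb0 hbw
    have hwpos : 0 < (-(t/s)) := by
      have : b p = (-(t/s)) * c p := by rw [hbw]; simp
      rcases lt_or_gt_of_ne hw0 with hlt | hgt
      · exfalso
        have : b p < 0 := by rw [this]; exact mul_neg_of_neg_of_pos hlt hcp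
        linarith [hbn p]
      · exact hgt
    exact ⟨-(t/s), hwpos, hbw⟩

lemma merge_step {M : Multiset (Fin n → ℝ)} (hnn : ∀ b ∈ M, ∀ i, 0 ≤ b i)
    (h0 : ∀ b ∈ M, b ≠ 0) (hnp : ¬ M.Pairwise (R (n := n))) :
    ∃ M₂ : Multiset (Fin n → ℝ), Multiset.card M₂ + 1 = Multiset.card M ∧
      (∀ b ∈ M₂, ∀ i, 0 ≤ b i) ∧
      (M₂.map fun b => vecMulVec b b).sum = (M.map fun b => vecMulVec b b).sum := by
  classical
  have key : ∃ (b c : Fin n → ℝ) (M'' : Multiset (Fin n → ℝ)) (w : ℝ),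
      M = b ::ₘ c ::ₘ M'' ∧ 0 < w ∧ b = w • c := by
    rw [pairwise_iff] at hnp
    push_neg at hnp
    by_cases hnd : M.Nodup
    · obtain ⟨b, hb, c, hc, hbc, hR⟩ := hnp hnd
      have hcb : c ∈ M.erase b := (Multiset.mem_erase_of_ne (Ne.symm hbc)).2 hc
      obtain ⟨w, hw, hbw⟩ := collinear_of_not_R (h0 b hb) (h0 c hc) (hnn b hb) (hnn c hc) hR
      refine ⟨b, c, (M.erase b).erase c, w, ?_, hw, hbw⟩
      rw [Multiset.cons_erase hcb, Multiset.cons_erase hb]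
    · obtain ⟨a, ha⟩ : ∃ a, 2 ≤ Multiset.count a M := by
        by_contra hcnt
        push_neg at hcnt
        exact hnd (Multiset.nodup_iff_count_le_one.2 (fun a => by have := hcnt a; omega))
      have ha1 : a ∈ M := Multiset.one_le_count_iff_mem.1 (by omega)
      have ha2 : a ∈ M.erase a := by
        rw [← Multiset.one_le_count_iff_mem, Multiset.count_erase_self]
        omega
      refine ⟨a, a, (M.erase a).erase a, 1, ?_, one_pos, (one_smul _ _).symm⟩
      rw [Multiset.cons_erase ha2, Multiset.cons_erase ha1]
  obtain ⟨b, c, M'', w, hM, hw, hbw⟩ := key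
  refine ⟨(Real.sqrt (w^2 + 1) • c) ::ₘ M'', ?_, ?_, ?_⟩
  · rw [hM]; simp
  · intro d hd i
    rcases Multiset.mem_cons.1 hd with rfl | hd
    · have : (0:ℝ) ≤ c i := hnn c (by rw [hM]; exact Multiset.mem_cons.2 (Or.inr (Multiset.mem_cons_self _ _))) i
      simpa using mul_nonneg (Real.sqrt_nonneg _) this
    · exact hnn d (by rw [hM]; exact Multiset.mem_cons.2 (Or.inr (Multiset.mem_cons.2 (Or.inr hd)))) i
  · rw [hM]
    simp only [Multiset.map_cons, Multiset.sum_cons]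
    rw [smul_outer, hbw, smul_outer, Real.mul_self_sqrt (by positivity), ← add_assoc]
    congr 1
    rw [show w^2 + 1 = w * w + 1 by ring, add_smul, one_smul]


lemma exists_rep_le (A : Matrix (Fin n) (Fin n) ℝ) :
    ∀ (N : ℕ) (M : Multiset (Fin n → ℝ)), Multiset.card M ≤ N →
    (∀ b ∈ M, ∀ i, 0 ≤ b i) → (M.map fun b => vecMulVec b b).sum = A →
    ∃ L', IsCPRep A L' ∧ Multiset.card L' ≤ Multiset.card M := by
  intro N
  induction N with
  | zero =>
    intro M hcard hnn hsum
    refine ⟨M, ⟨hnn, ?_, ?_, hsum⟩, le_rfl⟩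
    · intro b hb
      exact absurd (Multiset.card_eq_zero.1 (Nat.le_zero.1 hcard) ▸ hb) (Multiset.notMem_zero b)
    · rw [Multiset.card_eq_zero.1 (Nat.le_zero.1 hcard)]
      exact ⟨[], rfl, List.Pairwise.nil⟩
  | succ N ih =>
    intro M hcard hnn hsum
    by_cases hz : ∃ b ∈ M, b = (0 : Fin n → ℝ)
    · obtain ⟨b, hb, rfl⟩ := hz
      set M' := M.erase 0 with hM'
      have hMeq : M = (0 : Fin n → ℝ) ::ₘ M' := (Multiset.cons_erase hb).symm
      have hsum' : (M'.map fun b => vecMulVec b b).sum = A := by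
        rw [hMeq] at hsum
        simp only [Multiset.map_cons, Multiset.sum_cons] at hsum
        rw [← hsum]
        have : vecMulVec (0 : Fin n → ℝ) (0 : Fin n → ℝ) = 0 := by
          ext p q; simp [vecMulVec_apply]
        rw [this, zero_add]
      have hcard' : Multiset.card M' ≤ N := by
        have := congrArg Multiset.card hMeq
        simp at this
        omega
      obtain ⟨L', hL', hle⟩ := ih M' hcard' (fun c hc i => hnn c (by rw [hMeq]; exact Multiset.mem_cons.2 (Or.inr hc)) i) hsum'
      refine ⟨L', hL', le_trans hle ?_⟩
      have := congrArg Multiset.card hMeq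
      simp at this
      omega
    · push_neg at hz
      by_cases hP : M.Pairwise (R (n := n))
      · exact ⟨M, ⟨hnn, hz, hP, hsum⟩, le_rfl⟩
      · obtain ⟨M₂, hc2, hnn2, hsum2⟩ := merge_step hnn hz hP
        obtain ⟨L', hL', hle⟩ := ih M₂ (by omega) hnn2 (by rw [hsum2]; exact hsum)
        exact ⟨L', hL', by omega⟩

lemma cpRank_le_pseudo {M : Multiset (Fin n → ℝ)} (hnn : ∀ b ∈ M, ∀ i, 0 ≤ b i)
    (hsum : (M.map fun b => vecMulVec b b).sum = A) :
    cpRank A ≤ Multiset.card M := by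
  obtain ⟨L', hL', hle⟩ := exists_rep_le A (Multiset.card M) M le_rfl hnn hsum
  exact le_trans (Nat.sInf_le ⟨L', hL', rfl⟩) hle

lemma exists_min_rep (hCP : ∃ L, IsCPRep A L) :
    ∃ L, IsCPRep A L ∧ Multiset.card L = cpRank A := by
  obtain ⟨L₀, h₀⟩ := hCP
  have hne : {k | ∃ L, IsCPRep A L ∧ Multiset.card L = k}.Nonempty := ⟨_, L₀, h₀, rfl⟩
  obtain ⟨L, hL, hcard⟩ := Nat.sInf_mem hne
  exact ⟨L, hL, hcard⟩

end Merge

section Walks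
open SimpleGraph
variable {V : Type*} {G : SimpleGraph V}

def wratio (g : V → V → ℝ) : {u v : V} → G.Walk u v → ℝ
  | _, _, .nil => 1
  | _, _, .cons (u := a) (v := b) _ p => g a b * wratio g p

@[simp] lemma wratio_nil (g : V → V → ℝ) {u : V} : wratio g (Walk.nil : G.Walk u u) = 1 := rfl

@[simp] lemma wratio_cons (g : V → V → ℝ) {u v w : V} (h : G.Adj u v) (p : G.Walk v w) :
    wratio g (Walk.cons h p) = g u v * wratio g p := rfl

lemma wratio_append (g : V → V → ℝ) {u v w : V} (p : G.Walk u v) (q : G.Walk v w) :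
    wratio g (p.append q) = wratio g p * wratio g q := by
  induction p with
  | nil => simp
  | cons h p ih => simp [Walk.cons_append, ih, mul_assoc]

lemma wratio_mul_reverse (g : V → V → ℝ) (hg1 : ∀ a b, g a b * g b a = 1)
    {u v : V} (p : G.Walk u v) : wratio g p * wratio g p.reverse = 1 := by
  induction p with
  | nil => simp
  | @cons a b c h p ih =>
    rw [Walk.reverse_cons, wratio_cons, wratio_append]
    have h2 : wratio g (Walk.cons h.symm Walk.nil) = g b a := by simp
    rw [h2]
    calc g a b * wratio g p * (wratio g p.reverse * g b a)
        = (wratio g p * wratio g p.reverse) * (g a b * g b a) := by ring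
    _ = 1 := by rw [ih, hg1]; ring

lemma wratio_ne_zero (g : V → V → ℝ) (hg1 : ∀ a b, g a b * g b a = 1)
    {u v : V} (p : G.Walk u v) : wratio g p ≠ 0 :=
  left_ne_zero_of_mul_eq_one (wratio_mul_reverse g hg1 p)

lemma wratio_eq_prod (g : V → V → ℝ) {u v : V} (p : G.Walk u v) :
    wratio g p = ∏ t ∈ Finset.range p.length, g (p.getVert t) (p.getVert (t+1)) := by
  induction p with
  | nil => simp
  | cons h p ih =>
    rw [wratio_cons, ih, Walk.length_cons, Finset.prod_range_succ']
    simp only [Walk.getVert_cons_succ]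
    rw [mul_comm]
    congr 1
    simp [Walk.getVert_zero]


lemma path_closed_nil {u : V} {q : G.Walk u u} (hq : q.support.Nodup) : q = Walk.nil := by
  cases q with
  | nil => rfl
  | cons h p =>
    exfalso
    rw [Walk.support_cons, List.nodup_cons] at hq
    exact hq.1 (Walk.end_mem_support p)

lemma path_with_edge {u v : V} {p : G.Walk u v} (hp : p.IsPath) (huv : u ≠ v)
    (he : s(v, u) ∈ p.edges) : ∃ (h' : G.Adj u v), p = Walk.cons h' Walk.nil := by
  cases p with
  | nil => simp at he
  | @cons a b c h q =>
    rw [Walk.edges_cons, List.mem_cons] at he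
    rcases he with he | he
    · have hbv : b = v := by
        rw [Sym2.eq_iff] at he
        rcases he with ⟨h1, h2⟩ | ⟨h1, h2⟩
        · exact absurd h1.symm huv
        · exact h1.symm
      subst hbv
      have hq : q = Walk.nil := path_closed_nil (((Walk.cons_isPath_iff h q).1 hp).1).2
      exact ⟨h, by rw [hq]⟩
    · exfalso
      have : u ∈ q.support := Walk.snd_mem_support_of_mem_edges q he
      exact ((Walk.cons_isPath_iff h q).1 hp).2 this

theorem wratio_closed_eq_one [DecidableEq V] (g : V → V → ℝ) (hg1 : ∀ a b, g a b * g b a = 1)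
    (hcyc : ∀ (v : V) (c : G.Walk v v), c.IsCycle → wratio g c = 1) :
    ∀ (N : ℕ) (v : V) (c : G.Walk v v), c.length ≤ N → wratio g c = 1 := by
  intro N
  induction N with
  | zero =>
    intro v c hc
    cases c with
    | nil => simp
    | cons h p => simp [Walk.length_cons] at hc
  | succ N ih =>
    intro v c hlen
    cases c with
    | nil => simp
    | @cons a b cc h p =>
      -- c = cons h p, h : G.Adj v b, p : G.Walk b v
      by_cases htl : ((Walk.cons h p).support.tail).Nodup
      · have hps : (Walk.cons h p).support.tail = p.support := by
          rw [Walk.support_cons]; rfl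
        rw [hps] at htl
        have hpath : p.IsPath := (Walk.isPath_def p).2 htl
        by_cases he : s(v, b) ∈ p.edges
        · -- p is the single edge b → v
          have hvb : b ≠ v := (G.ne_of_adj h).symm
          obtain ⟨h', hp⟩ := path_with_edge hpath hvb he
          subst hp
          simp only [wratio_cons, wratio_nil, mul_one]
          exact hg1 v b
        · exact hcyc v (Walk.cons h p) ((Walk.cons_isCycle_iff p h).2 ⟨hpath, he⟩)
      · -- repeated vertex in p.support
        have hps : (Walk.cons h p).support.tail = p.support := by
          rw [Walk.support_cons]; rfl
        rw [hps] at htl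
        obtain ⟨x, hx2⟩ : ∃ x, 2 ≤ p.support.count x := by
          by_contra hcnt
          push_neg at hcnt
          exact htl (List.nodup_iff_count_le_one.2 (fun a => by have := hcnt a; omega))
        have hx : x ∈ p.support := by
          rw [← List.count_pos_iff]
          omega
        obtain ⟨q₁, hq₁⟩ : ∃ q : G.Walk b x, q = p.takeUntil x hx := ⟨_, rfl⟩
        obtain ⟨q₂, hq₂⟩ : ∃ q : G.Walk x v, q = p.dropUntil x hx := ⟨_, rfl⟩
        have hspec : q₁.append q₂ = p := by rw [hq₁, hq₂]; exact Walk.take_spec p hx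
        have hcnt1 : q₁.support.count x = 1 := by
          rw [hq₁]; exact Walk.count_support_takeUntil_eq_one p hx
        have hxq₂ : x ∈ q₂.support.tail := by
          have hsup : p.support = q₁.support ++ q₂.support.tail := by
            rw [← hspec, Walk.support_append]
          rw [← List.count_pos_iff]
          have := congrArg (List.count x) hsup
          rw [List.count_append] at this
          omega
        clear hq₁ hq₂ hx2 hcnt1 htl hps hx
        cases q₂ with
        | nil => simp at hxq₂
        | @cons x' w vv h₂ q₃ =>
          have hxq₃ : x ∈ q₃.support := by
            rw [Walk.support_cons] at hxq₂
            exact hxq₂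
          obtain ⟨r₁, hr₁⟩ : ∃ r : G.Walk w x, r = q₃.takeUntil x hxq₃ := ⟨_, rfl⟩
          obtain ⟨r₂, hr₂⟩ : ∃ r : G.Walk x v, r = q₃.dropUntil x hxq₃ := ⟨_, rfl⟩
          have hrspec : r₁.append r₂ = q₃ := by rw [hr₁, hr₂]; exact Walk.take_spec q₃ hxq₃
          clear hr₁ hr₂ hxq₃ hxq₂
          have hlen1 : q₁.length + (1 + (r₁.length + r₂.length)) = p.length := by
            rw [← hspec, Walk.length_append, Walk.length_cons, ← hrspec, Walk.length_append]
            ring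
          have hlenc : p.length + 1 ≤ N + 1 := by
            rw [Walk.length_cons] at hlen
            omega
          have e1 : wratio g (Walk.cons h₂ r₁ : G.Walk x x) = 1 := by
            apply ih
            rw [Walk.length_cons]
            omega
          have e2 : wratio g ((r₂.append (Walk.cons h q₁)) : G.Walk x x) = 1 := by
            apply ih
            rw [Walk.length_append, Walk.length_cons]
            omega
          rw [wratio_cons] at e1
          rw [wratio_append, wratio_cons] at e2
          have hp' : wratio g p = wratio g q₁ * (g x w * (wratio g r₁ * wratio g r₂)) := by
            rw [← hspec, wratio_append, wratio_cons, ← hrspec, wratio_append]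
          rw [wratio_cons, hp']
          nlinarith [e1, e2]

end Walks

def pmat (a : ℕ → ℝ) : ℕ → ℝ × ℝ × ℝ × ℝ
  | 0 => (1, 0, 0, 1)
  | t+1 =>
    ((1 + a t) * (pmat a t).1 - a t * (pmat a t).2.2.1,
     (1 + a t) * (pmat a t).2.1 - a t * (pmat a t).2.2.2,
     (pmat a t).1, (pmat a t).2.1)

lemma pmat_facts (a : ℕ → ℝ) (ha : ∀ t, 0 < a t) (t : ℕ) :
    (pmat a t).1 - (pmat a t).2.2.1 = ∏ s ∈ Finset.range t, a s ∧
    (pmat a t).2.2.2 - (pmat a t).2.1 = ∏ s ∈ Finset.range t, a s ∧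
    (pmat a t).2.1 + (pmat a t).2.2.1 = 1 - ∏ s ∈ Finset.range t, a s ∧
    0 ≤ (pmat a t).2.2.1 ∧ 0 < (pmat a t).1 := by
  induction t with
  | zero => simp [pmat]
  | succ t ih =>
    obtain ⟨h1, h2, h3, h4, h5⟩ := ih
    have hD : 0 < ∏ s ∈ Finset.range t, a s := Finset.prod_pos (fun s _ => ha s)
    rw [Finset.prod_range_succ]
    refine ⟨?_, ?_, ?_, ?_, ?_⟩
    · show (1 + a t) * (pmat a t).1 - a t * (pmat a t).2.2.1 - (pmat a t).1 = (∏ s ∈ Finset.range t, a s) * a t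
      linear_combination (a t) * h1
    · show (pmat a t).2.1 - ((1 + a t) * (pmat a t).2.1 - a t * (pmat a t).2.2.2) = (∏ s ∈ Finset.range t, a s) * a t
      linear_combination (a t) * h2
    · show (1 + a t) * (pmat a t).2.1 - a t * (pmat a t).2.2.2 + (pmat a t).1 = 1 - (∏ s ∈ Finset.range t, a s) * a t
      linear_combination h3 + h1 - (a t) * h2
    · show 0 ≤ (pmat a t).1
      linarith
    · show 0 < (1 + a t) * (pmat a t).1 - a t * (pmat a t).2.2.1
      nlinarith [ha t, h1, hD, h5]

lemma exists_mu (a : ℕ → ℝ) (ha : ∀ t, 0 < a t) (m : ℕ) (hm : 1 ≤ m)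
    (hD : 1 < ∏ t ∈ Finset.range m, a t) :
    ∃ μ : ℕ → ℝ, (∀ t, 1 < μ t) ∧ (∀ t, μ (t+1) = 1 + a t * (1 - 1/μ t)) ∧ μ m = μ 0 := by
  obtain ⟨hP, hS, hQR, hR0, hPpos⟩ := pmat_facts a ha m
  set P := (pmat a m).1
  set Q := (pmat a m).2.1
  set Rm := (pmat a m).2.2.1
  set S := (pmat a m).2.2.2
  set D := ∏ t ∈ Finset.range m, a t with hDdef
  have hRpos : 0 < Rm := by
    obtain ⟨k, rfl⟩ : ∃ k, m = k + 1 := ⟨m - 1, by omega⟩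
    show 0 < (pmat a (k+1)).2.2.1
    have := (pmat_facts a ha k).2.2.2.2
    simp only [pmat]
    exact this
  set p0 : ℝ := -Q with hp0
  set q0 : ℝ := Rm with hq0
  have hp0q0 : q0 < p0 := by
    have : Q + Rm = 1 - D := hQR
    simp only [hp0, hq0]
    linarith
  set pf : ℕ → ℝ := fun t => (pmat a t).1 * p0 + (pmat a t).2.1 * q0 with hpf
  set qf : ℕ → ℝ := fun t => (pmat a t).2.2.1 * p0 + (pmat a t).2.2.2 * q0 with hqf
  have hrecp : ∀ t, pf (t+1) = (1 + a t) * pf t - a t * qf t := by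
    intro t
    simp only [hpf, hqf, pmat]
    ring
  have hrecq : ∀ t, qf (t+1) = pf t := by
    intro t
    simp only [hpf, hqf, pmat]
  have hpos : ∀ t, 0 < qf t ∧ qf t < pf t := by
    intro t
    induction t with
    | zero =>
      constructor
      · simp only [hqf, pmat]
        simpa using hRpos
      · simp only [hpf, hqf, pmat]
        simpa using hp0q0
    | succ t iht =>
      obtain ⟨hq, hlt⟩ := iht
      constructor
      · rw [hrecq]; linarith
      · rw [hrecq, hrecp]
        nlinarith [ha t]
  refine ⟨fun t => pf t / qf t, ?_, ?_, ?_⟩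
  · intro t
    obtain ⟨hq, hlt⟩ := hpos t
    rw [lt_div_iff₀ hq]
    linarith
  · intro t
    obtain ⟨hq, hlt⟩ := hpos t
    obtain ⟨hq1, hlt1⟩ := hpos (t+1)
    show pf (t+1) / qf (t+1) = 1 + a t * (1 - 1/(pf t / qf t))
    rw [hrecp, hrecq]
    have hpf0 : pf t ≠ 0 := by linarith
    have hqf0 : qf t ≠ 0 := by linarith
    field_simp
    ring
  · have hDpos : (0:ℝ) < D := by linarith
    have hpm : pf m = D * p0 := by
      simp only [hpf]
      show P * p0 + Q * q0 = D * p0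
      simp only [hp0, hq0]
      nlinarith [hP]
    have hqm : qf m = D * q0 := by
      simp only [hqf]
      show Rm * p0 + S * q0 = D * q0
      simp only [hp0, hq0]
      nlinarith [hS]
    have h0p : pf 0 = p0 := by simp [hpf, pmat]
    have h0q : qf 0 = q0 := by simp [hqf, pmat]
    show pf m / qf m = pf 0 / qf 0
    rw [hpm, hqm, h0p, h0q, mul_div_mul_left _ _ (ne_of_gt hDpos)]


lemma walk_support_map {V : Type*} {G : SimpleGraph V} {u v : V} (p : G.Walk u v) :
    p.support = (List.range (p.length + 1)).map p.getVert := by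
  induction p with
  | nil =>
    have : List.range 1 = [0] := rfl
    simp [this]
  | @cons a b c h p ih =>
    rw [SimpleGraph.Walk.support_cons, SimpleGraph.Walk.length_cons, List.range_succ_eq_map,
      List.map_cons, List.map_map, ih]
    refine congrArg₂ _ ?_ ?_
    · rw [SimpleGraph.Walk.getVert_zero]
    · apply List.map_congr_left
      intro t _
      simp [SimpleGraph.Walk.getVert_cons_succ, Function.comp]

lemma rotate_case (hL : IsCPRep A L) (hLcard : Multiset.card L = cpRank A)
    (hLn : L.Nodup)
    (huniq : ∀ (a b' : Fin n), a ≠ b' → ∀ c₁ ∈ L, ∀ c₂ ∈ L,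
      0 < c₁ a * c₁ b' → 0 < c₂ a * c₂ b' → c₁ = c₂)
    (hRall : ∀ b ∈ L, ∀ c ∈ L, b ≠ c → R b c)
    (m : ℕ) (hm3 : 3 ≤ m) (s : ℕ → Fin n) (bv : ℕ → Fin n → ℝ)
    (hs0m : s 0 = s m)
    (hinj : ∀ t r, 1 ≤ t → t ≤ m → 1 ≤ r → r ≤ m → s t = s r → t = r)
    (hne : ∀ t, t < m → s t ≠ s (t+1))
    (hbvL : ∀ t, t < m → bv t ∈ L)
    (hx : ∀ t, t < m → 0 < bv t (s t))
    (hy : ∀ t, t < m → 0 < bv t (s (t+1)))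
    (hsup : ∀ t, t < m → ∀ p, p ≠ s t → p ≠ s (t+1) → bv t p = 0)
    (hXY : ∏ t ∈ Finset.range m, bv t (s t) < ∏ t ∈ Finset.range m, bv t (s (t+1))) :
    ∃ L₁ L₂ : Multiset (Fin n → ℝ), L₁ ≠ L₂ ∧
      (IsCPRep A L₁ ∧ Multiset.card L₁ = cpRank A) ∧
      (IsCPRep A L₂ ∧ Multiset.card L₂ = cpRank A) := by
  classical
  set x : ℕ → ℝ := fun t => bv t (s t) with hxd
  set y : ℕ → ℝ := fun t => bv t (s (t+1)) with hyd
  have hm0 : 0 < m := by omega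
  -- the edge-distinctness lemma
  have ELemma : ∀ t r, t < m → r < m →
      (s t = s r ∨ s t = s (r+1)) → (s (t+1) = s r ∨ s (t+1) = s (r+1)) → t = r := by
    intro t r ht hr h1 h2
    -- normalize indices into [1, m]
    have keyS : ∀ u, u < m → ∃ u', 1 ≤ u' ∧ u' ≤ m ∧ s u' = s u ∧ u' % m = u % m := by
      intro u hu
      rcases Nat.eq_zero_or_pos u with rfl | hu1
      · exact ⟨m, by omega, le_rfl, hs0m.symm, by simp [Nat.mod_self]⟩
      · exact ⟨u, hu1, by omega, rfl, rfl⟩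
    obtain ⟨t', ht'1, ht'm, ht's, ht'mod⟩ := keyS t ht
    obtain ⟨r', hr'1, hr'm, hr's, hr'mod⟩ := keyS r hr
    rcases h1 with h1 | h1
    · -- s t = s r
      have e := hinj t' r' ht'1 ht'm hr'1 hr'm (by rw [ht's, hr's, h1])
      have e2 : t % m = r % m := by rw [← ht'mod, ← hr'mod, e]
      rw [Nat.mod_eq_of_lt ht] at e2
      rwa [Nat.mod_eq_of_lt hr] at e2
    · -- s t = s (r+1)
      rcases h2 with h2 | h2
      · -- s (t+1) = s r
        have e1 := hinj t' (r+1) ht'1 ht'm (by omega) (by omega) (by rw [ht's, h1])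
        have e2 := hinj (t+1) r' (by omega) (by omega) hr'1 hr'm (by rw [hr's, h2])
        -- t' ≡ t, r' ≡ r (mod m); e1 : t' = r+1, e2 : t+1 = r'
        have ht2 : t % m = (r+1) % m := by
          rw [← ht'mod, e1]
        have hr2 : (t+1) % m = r % m := by
          rw [← hr'mod, ← e2]
        rw [Nat.mod_eq_of_lt ht] at ht2
        rw [Nat.mod_eq_of_lt hr] at hr2
        -- t = (r+1) % m and (t+1) % m = r
        rcases Nat.lt_or_ge (r+1) m with hrm | hrm
        · rw [Nat.mod_eq_of_lt hrm] at ht2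
          subst ht2
          rcases Nat.lt_or_ge (r+2) m with hrm2 | hrm2
          · rw [Nat.mod_eq_of_lt hrm2] at hr2; omega
          · have : r + 2 = m := by omega
            rw [show r + 1 + 1 = m by omega, Nat.mod_self] at hr2
            omega
        · have : r + 1 = m := by omega
          rw [this, Nat.mod_self] at ht2
          subst ht2
          rw [Nat.mod_eq_of_lt (by omega)] at hr2
          omega
      · -- s (t+1) = s (r+1)
        have := hinj (t+1) (r+1) (by omega) (by omega) (by omega) (by omega) h2
        omega
  -- injectivity of bv on [0, m)
  have hbvsupp : ∀ t, t < m → ∀ p, bv t p ≠ 0 → p = s t ∨ p = s (t+1) := by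
    intro t ht p hp
    by_contra hc
    push_neg at hc
    exact hp (hsup t ht p hc.1 hc.2)
  have hbvinj : ∀ t r, t < m → r < m → bv t = bv r → t = r := by
    intro t r ht hr hbv
    apply ELemma t r ht hr
    · have : bv r (s t) ≠ 0 := by rw [← hbv]; exact ne_of_gt (hx t ht)
      exact hbvsupp r hr _ this
    · have : bv r (s (t+1)) ≠ 0 := by rw [← hbv]; exact ne_of_gt (hy t ht)
      exact hbvsupp r hr _ this
  -- products and μ
  have hX : 0 < ∏ t ∈ Finset.range m, x t :=
    Finset.prod_pos (fun t htm => hx t (Finset.mem_range.1 htm))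
  have hY : 0 < ∏ t ∈ Finset.range m, y t :=
    Finset.prod_pos (fun t htm => hy t (Finset.mem_range.1 htm))
  set a : ℕ → ℝ := fun t => if h : t < m then (y t)^2 / (x ((t+1) % m))^2 else 1 with had
  have hapos : ∀ t, 0 < a t := by
    intro t
    simp only [had]
    split_ifs with h
    · exact div_pos (pow_pos (hy t h) 2) (pow_pos (hx _ (Nat.mod_lt _ hm0)) 2)
    · exact one_pos
  have hprodshift : ∏ t ∈ Finset.range m, (x ((t+1) % m))^2 = ∏ t ∈ Finset.range m, (x t)^2 := by
    obtain ⟨k, rfl⟩ : ∃ k, m = k + 1 := ⟨m - 1, by omega⟩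
    rw [Finset.prod_range_succ, Finset.prod_range_succ']
    have h1 : ∀ t ∈ Finset.range k, (x ((t+1) % (k+1)))^2 = (x (t+1))^2 := by
      intro t htk
      rw [Nat.mod_eq_of_lt (by simpa using Finset.mem_range.1 htk)]
    rw [Finset.prod_congr rfl h1, Nat.mod_self]
  have hD : 1 < ∏ t ∈ Finset.range m, a t := by
    have : ∏ t ∈ Finset.range m, a t
        = (∏ t ∈ Finset.range m, (y t)^2) / (∏ t ∈ Finset.range m, (x t)^2) := by
      rw [← hprodshift, ← Finset.prod_div_distrib]
      apply Finset.prod_congr rfl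
      intro t htm
      simp only [had]
      rw [dif_pos (Finset.mem_range.1 htm)]
    have hXp : 0 < ∏ t ∈ Finset.range m, (x t)^2 :=
      Finset.prod_pos (fun t htm => pow_pos (hx t (Finset.mem_range.1 htm)) 2)
    rw [this, lt_div_iff₀ hXp, one_mul, Finset.prod_pow, Finset.prod_pow]
    nlinarith [hX, hY, hXY]
  obtain ⟨μ, hμ1, hμrec, hμm⟩ := exists_mu a hapos m (by omega) hD
  have hμpos : ∀ t, 0 < μ t := fun t => lt_trans one_pos (hμ1 t)
  have hsμ1 : ∀ t, 1 < Real.sqrt (μ t) := by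
    intro t
    have := Real.sqrt_lt_sqrt (by norm_num) (hμ1 t)
    rwa [Real.sqrt_one] at this
  have hsμpos : ∀ t, 0 < Real.sqrt (μ t) := fun t => lt_trans one_pos (hsμ1 t)
  -- new vectors
  set bb : ℕ → (Fin n → ℝ) := fun t p =>
    if p = s t then Real.sqrt (μ t) * x t
    else if p = s (t+1) then y t / Real.sqrt (μ t) else 0 with hbbd
  have hbbs : ∀ t, t < m → bb t (s t) = Real.sqrt (μ t) * x t := by
    intro t ht; simp [hbbd]
  have hbbs1 : ∀ t, t < m → bb t (s (t+1)) = y t / Real.sqrt (μ t) := by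
    intro t ht; simp [hbbd, (hne t ht).symm]
  have hbb0 : ∀ t, t < m → ∀ p, p ≠ s t → p ≠ s (t+1) → bb t p = 0 := by
    intro t ht p h1 h2; simp [hbbd, h1, h2]
  have hbbp1 : ∀ t, t < m → 0 < bb t (s t) := by
    intro t ht; rw [hbbs t ht]; exact mul_pos (hsμpos t) (hx t ht)
  have hbbp2 : ∀ t, t < m → 0 < bb t (s (t+1)) := by
    intro t ht; rw [hbbs1 t ht]; exact div_pos (hy t ht) (hsμpos t)
  have hbbsupp : ∀ t, t < m → ∀ p, bb t p ≠ 0 → p = s t ∨ p = s (t+1) := by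
    intro t ht p hp
    by_contra hc
    push_neg at hc
    exact hp (hbb0 t ht p hc.1 hc.2)
  -- per-edge identity
  set Efun : Fin n → Matrix (Fin n) (Fin n) ℝ :=
    fun w p q => if p = w ∧ q = w then 1 else 0 with hEd
  have hμsq : ∀ t, Real.sqrt (μ t) * Real.sqrt (μ t) = μ t :=
    fun t => Real.mul_self_sqrt (le_of_lt (hμpos t))
  have key : ∀ t, t < m → vecMulVec (bb t) (bb t) =
      vecMulVec (bv t) (bv t) + ((μ t - 1) * (x t)^2) • Efun (s t)
        - ((1 - 1/(μ t)) * (y t)^2) • Efun (s (t+1)) := by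
    intro t ht
    have hst := hne t ht
    ext p q
    simp only [Matrix.add_apply, Matrix.sub_apply, Matrix.smul_apply, vecMulVec_apply,
      smul_eq_mul]
    simp only [hEd]
    by_cases hp1 : p = s t
    · by_cases hq1 : q = s t
      · rw [hp1, hq1, hbbs t ht]
        rw [if_pos ⟨rfl, rfl⟩, if_neg (fun hc => hst hc.1)]
        have e1 : bv t (s t) = x t := rfl
        rw [e1]
        linear_combination (x t * x t) * hμsq t
      · by_cases hq2 : q = s (t+1)
        · rw [hp1, hq2, hbbs t ht, hbbs1 t ht]
          rw [if_neg (fun hc => hst hc.2.symm), if_neg (fun hc => hst hc.1)]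
          have e1 : bv t (s t) = x t := rfl
          have e2 : bv t (s (t+1)) = y t := rfl
          rw [e1, e2]
          have hsne : Real.sqrt (μ t) ≠ 0 := ne_of_gt (hsμpos t)
          field_simp
          ring
        · rw [hbb0 t ht q hq1 hq2, hsup t ht q hq1 hq2]
          rw [if_neg (fun hc => hq1 hc.2), if_neg (fun hc => hq2 hc.2)]
          ring
    · by_cases hp2 : p = s (t+1)
      · by_cases hq1 : q = s t
        · rw [hp2, hq1, hbbs t ht, hbbs1 t ht]
          rw [if_neg (fun hc => hst hc.1.symm), if_neg (fun hc => hst hc.2)]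
          have e1 : bv t (s t) = x t := rfl
          have e2 : bv t (s (t+1)) = y t := rfl
          rw [e1, e2]
          have hsne : Real.sqrt (μ t) ≠ 0 := ne_of_gt (hsμpos t)
          field_simp
          ring
        · by_cases hq2 : q = s (t+1)
          · rw [hp2, hq2, hbbs1 t ht]
            rw [if_neg (fun hc => hst hc.1.symm), if_pos ⟨rfl, rfl⟩]
            have e2 : bv t (s (t+1)) = y t := rfl
            rw [e2]
            have hμne : μ t ≠ 0 := ne_of_gt (hμpos t)
            have hsne : Real.sqrt (μ t) ≠ 0 := ne_of_gt (hsμpos t)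
            rw [div_mul_div_comm, hμsq t]
            field_simp
            ring
          · rw [hbb0 t ht q hq1 hq2, hsup t ht q hq1 hq2]
            rw [if_neg (fun hc => hq1 hc.2), if_neg (fun hc => hq2 hc.2)]
            ring
      · rw [hbb0 t ht p hp1 hp2, hsup t ht p hp1 hp2]
        rw [if_neg (fun hc => hp1 hc.1), if_neg (fun hc => hp2 hc.1)]
        ring
  -- telescoping
  set Hm : ℕ → Matrix (Fin n) (Fin n) ℝ :=
    fun t => ((μ (t % m) - 1) * (x (t % m))^2) • Efun (s (t % m)) with hHmd
  have hH1 : ∀ t, t < m → ((μ t - 1) * (x t)^2) • Efun (s t) = Hm t := by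
    intro t ht
    simp only [hHmd, Nat.mod_eq_of_lt ht]
  have hμshift : ∀ t, t < m → μ ((t+1) % m) = μ (t+1) := by
    intro t ht
    rcases Nat.lt_or_ge (t+1) m with h | h
    · rw [Nat.mod_eq_of_lt h]
    · have : t + 1 = m := by omega
      rw [this, Nat.mod_self, ← hμm]
  have hsshift : ∀ t, t < m → s ((t+1) % m) = s (t+1) := by
    intro t ht
    rcases Nat.lt_or_ge (t+1) m with h | h
    · rw [Nat.mod_eq_of_lt h]
    · have : t + 1 = m := by omega
      rw [this, Nat.mod_self, hs0m]
  have hH2 : ∀ t, t < m → ((1 - 1/(μ t)) * (y t)^2) • Efun (s (t+1)) = Hm (t+1) := by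
    intro t ht
    simp only [hHmd]
    rw [hμshift t ht, hsshift t ht]
    congr 1
    have har : a t = (y t)^2 / (x ((t+1) % m))^2 := by
      simp only [had]; rw [dif_pos ht]
    have hxm : 0 < x ((t+1) % m) := hx _ (Nat.mod_lt _ hm0)
    have hrec := hμrec t
    rw [har] at hrec
    have hμt : μ t ≠ 0 := ne_of_gt (hμpos t)
    have hxne : x ((t+1) % m) ≠ 0 := ne_of_gt hxm
    -- (μ (t+1) - 1) * x((t+1)%m)^2 = (1 - 1/μ t) * y t ^ 2
    have e : μ (t+1) - 1 = (y t)^2 / (x ((t+1) % m))^2 * (1 - 1/μ t) := by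
      rw [hrec]; ring
    rw [e]
    field_simp
  have hsums : ∑ t ∈ Finset.range m, vecMulVec (bb t) (bb t)
      = ∑ t ∈ Finset.range m, vecMulVec (bv t) (bv t) := by
    have e1 : ∀ t ∈ Finset.range m, vecMulVec (bb t) (bb t)
        = vecMulVec (bv t) (bv t) + (Hm t - Hm (t+1)) := by
      intro t htm
      have ht := Finset.mem_range.1 htm
      rw [key t ht, hH1 t ht, hH2 t ht]
      abel
    rw [Finset.sum_congr rfl e1, Finset.sum_add_distrib, Finset.sum_range_sub' Hm m]
    have : Hm m = Hm 0 := by simp only [hHmd, Nat.mod_self, Nat.zero_mod]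
    rw [this]
    simp
  -- multiset assembly
  set Lc : Multiset (Fin n → ℝ) := (Multiset.range m).map bv with hLcd
  have hLcn : Lc.Nodup := by
    apply Multiset.Nodup.map_on _ (Multiset.nodup_range m)
    intro t htm r hrm h
    exact hbvinj t r (Multiset.mem_range.1 htm) (Multiset.mem_range.1 hrm) h
  have hLcle : Lc ≤ L := by
    rw [Multiset.le_iff_count]
    intro d
    by_cases hd : d ∈ Lc
    · have h1 : Multiset.count d Lc = 1 := by
        rw [← Multiset.one_le_count_iff_mem] at hd
        have h2 := (Multiset.nodup_iff_count_le_one.1 hLcn) d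
        omega
      rw [h1]
      rw [Multiset.one_le_count_iff_mem]
      obtain ⟨t, htm, rfl⟩ := Multiset.mem_map.1 hd
      exact hbvL t (Multiset.mem_range.1 htm)
    · rw [Multiset.count_eq_zero_of_notMem hd]
      exact Nat.zero_le _
  set L₀ : Multiset (Fin n → ℝ) := L - Lc with hL₀d
  have hsplit : L₀ + Lc = L := tsub_add_cancel_of_le hLcle
  have hL₀le : L₀ ≤ L := tsub_le_self
  have hL₀mem : ∀ d ∈ L₀, d ∈ L := fun d hd => Multiset.mem_of_le hL₀le hd
  set L' : Multiset (Fin n → ℝ) := L₀ + (Multiset.range m).map bb with hL'd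
  have hmapsum : ∀ (f : ℕ → Fin n → ℝ),
      (((Multiset.range m).map f).map (fun d => vecMulVec d d)).sum
        = ∑ t ∈ Finset.range m, vecMulVec (f t) (f t) := by
    intro f
    rw [Multiset.map_map]
    rfl
  have hsum' : (L'.map fun d => vecMulVec d d).sum = A := by
    have hA := hL.2.2.2
    rw [← hsplit, Multiset.map_add, Multiset.sum_add, hmapsum bv] at hA
    rw [hL'd, Multiset.map_add, Multiset.sum_add, hmapsum bb, hsums]
    exact hA
  have hcard' : Multiset.card L' = Multiset.card L := by
    rw [hL'd, ← hsplit]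
    simp [hLcd]
  -- bb t is never in L
  have hbbneL : ∀ t, t < m → bb t ∉ L := by
    intro t ht hmem
    have hpos1 : 0 < bb t (s t) * bb t (s (t+1)) :=
      mul_pos (hbbp1 t ht) (hbbp2 t ht)
    have hpos2 : 0 < bv t (s t) * bv t (s (t+1)) := mul_pos (hx t ht) (hy t ht)
    have heq : bb t = bv t :=
      huniq (s t) (s (t+1)) (hne t ht) (bb t) hmem (bv t) (hbvL t ht) hpos1 hpos2
    have := congrFun heq (s t)
    rw [hbbs t ht] at this
    have hxt := hx t ht
    have := hsμ1 t
    nlinarith [hx t ht, hsμ1 t, this]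
  have hL'ne : L' ≠ L := by
    intro h
    have hmem : bb 0 ∈ L' := by
      rw [hL'd]
      refine Multiset.mem_add.2 (Or.inr ?_)
      exact Multiset.mem_map.2 ⟨0, Multiset.mem_range.2 hm0, rfl⟩
    rw [h] at hmem
    exact hbbneL 0 hm0 hmem
  -- nodup of L'
  have hbbinj : ∀ t r, t < m → r < m → bb t = bb r → t = r := by
    intro t r ht hr hbb
    apply ELemma t r ht hr
    · have : bb r (s t) ≠ 0 := by rw [← hbb]; exact ne_of_gt (hbbp1 t ht)
      exact hbbsupp r hr _ this
    · have : bb r (s (t+1)) ≠ 0 := by rw [← hbb]; exact ne_of_gt (hbbp2 t ht)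
      exact hbbsupp r hr _ this
  have hL'nodup : L'.Nodup := by
    rw [hL'd, Multiset.nodup_add]
    refine ⟨Multiset.nodup_of_le hL₀le hLn, ?_, ?_⟩
    · apply Multiset.Nodup.map_on _ (Multiset.nodup_range m)
      intro t htm r hrm h
      exact hbbinj t r (Multiset.mem_range.1 htm) (Multiset.mem_range.1 hrm) h
    · rw [Multiset.disjoint_left]
      intro d hd hdm
      obtain ⟨t, htm, rfl⟩ := Multiset.mem_map.1 hdm
      exact hbbneL t (Multiset.mem_range.1 htm) (hL₀mem _ hd)
  -- cross linear independence
  have hLpos : ∀ d ∈ L, ∀ p, d p ≠ 0 → 0 < d p :=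
    fun d hd p hp => lt_of_le_of_ne (hL.1 d hd p) (Ne.symm hp)
  have hcross : ∀ t, t < m → ∀ d ∈ L₀, R d (bb t) := by
    intro t ht d hd
    have hdL := hL₀mem d hd
    have hd0 : d ≠ 0 := hL.2.1 d hdL
    by_cases h1 : d (s t) = 0
    · exact R_symm (pair_indep (ne_of_gt (hbbp1 t ht)) h1 hd0)
    · by_cases h2 : d (s (t+1)) = 0
      · exact R_symm (pair_indep (ne_of_gt (hbbp2 t ht)) h2 hd0)
      · exfalso
        have hdpos : 0 < d (s t) * d (s (t+1)) :=
          mul_pos (hLpos d hdL _ h1) (hLpos d hdL _ h2)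
        have heq : d = bv t :=
          huniq (s t) (s (t+1)) (hne t ht) d hdL (bv t) (hbvL t ht) hdpos
            (mul_pos (hx t ht) (hy t ht))
        have hc1 : 1 ≤ Multiset.count (bv t) L₀ := by
          rw [← heq]
          exact Multiset.one_le_count_iff_mem.2 hd
        have hc2 : 1 ≤ Multiset.count (bv t) Lc := by
          rw [Multiset.one_le_count_iff_mem]
          exact Multiset.mem_map.2 ⟨t, Multiset.mem_range.2 ht, rfl⟩
        have hcL : Multiset.count (bv t) L ≤ 1 := Multiset.nodup_iff_count_le_one.1 hLn (bv t)
        rw [← hsplit, Multiset.count_add] at hcL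
        omega
  have hpair' : L'.Pairwise (R (n := n)) := by
    rw [pairwise_iff]
    refine ⟨hL'nodup, ?_⟩
    intro d hd e he hde
    rw [hL'd, Multiset.mem_add] at hd he
    rcases hd with hd | hd <;> rcases he with he | he
    · exact hRall d (hL₀mem d hd) e (hL₀mem e he) hde
    · obtain ⟨t, htm, rfl⟩ := Multiset.mem_map.1 he
      exact hcross t (Multiset.mem_range.1 htm) d hd
    · obtain ⟨t, htm, rfl⟩ := Multiset.mem_map.1 hd
      exact R_symm (hcross t (Multiset.mem_range.1 htm) e he)
    · obtain ⟨t, htm, rfl⟩ := Multiset.mem_map.1 hd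
      obtain ⟨r, hrm, rfl⟩ := Multiset.mem_map.1 he
      have ht := Multiset.mem_range.1 htm
      have hr := Multiset.mem_range.1 hrm
      have htr : t ≠ r := fun h => hde (by rw [h])
      by_cases h1 : bb r (s t) = 0
      · refine pair_indep (ne_of_gt (hbbp1 t ht)) h1 ?_
        intro h0
        have := congrFun h0 (s r)
        simp only [Pi.zero_apply] at this
        exact ne_of_gt (hbbp1 r hr) this
      · by_cases h2 : bb r (s (t+1)) = 0
        · refine pair_indep (ne_of_gt (hbbp2 t ht)) h2 ?_
          intro h0
          have := congrFun h0 (s r)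
          simp only [Pi.zero_apply] at this
          exact ne_of_gt (hbbp1 r hr) this
        · exfalso
          exact htr (ELemma t r ht hr (hbbsupp r hr _ h1) (hbbsupp r hr _ h2))
  -- nonneg and nonzero of L'
  have hnn' : ∀ d ∈ L', ∀ p, 0 ≤ d p := by
    intro d hd p
    rw [hL'd, Multiset.mem_add] at hd
    rcases hd with hd | hd
    · exact hL.1 d (hL₀mem d hd) p
    · obtain ⟨t, htm, rfl⟩ := Multiset.mem_map.1 hd
      have ht := Multiset.mem_range.1 htm
      by_cases h1 : p = s t
      · rw [h1]; exact le_of_lt (hbbp1 t ht)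
      · by_cases h2 : p = s (t+1)
        · rw [h2]; exact le_of_lt (hbbp2 t ht)
        · rw [hbb0 t ht p h1 h2]
  have hz' : ∀ d ∈ L', d ≠ 0 := by
    intro d hd
    rw [hL'd, Multiset.mem_add] at hd
    rcases hd with hd | hd
    · exact hL.2.1 d (hL₀mem d hd)
    · obtain ⟨t, htm, rfl⟩ := Multiset.mem_map.1 hd
      have ht := Multiset.mem_range.1 htm
      intro h0
      have := congrFun h0 (s t)
      simp only [Pi.zero_apply] at this
      exact ne_of_gt (hbbp1 t ht) this
  exact ⟨L, L', fun h => hL'ne h.symm, ⟨hL, hLcard⟩,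
    ⟨⟨hnn', hz', hpair', hsum'⟩, by rw [hcard', hLcard]⟩⟩


/-- Case 1: two summands fitting in a common 2×2 block with positive off-diagonal. -/
lemma case1 (hL : IsCPRep A L) (hLcard : Multiset.card L = cpRank A)
    {b c : Fin n → ℝ} (hbL : b ∈ L) (hcL : c ∈ L) (hbc : b ≠ c)
    {i j : Fin n} (hij : i ≠ j)
    (hbs : ∀ p, p ≠ i → p ≠ j → b p = 0) (hcs : ∀ p, p ≠ i → p ≠ j → c p = 0)
    (hγ : 0 < b i * b j + c i * c j) :
    ∃ L₁ L₂ : Multiset (Fin n → ℝ), L₁ ≠ L₂ ∧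
      (IsCPRep A L₁ ∧ Multiset.card L₁ = cpRank A) ∧
      (IsCPRep A L₂ ∧ Multiset.card L₂ = cpRank A) := by
  classical
  have hR : R b c := (pairwise_iff.1 hL.2.2.1).2 b hbL c hcL hbc
  have hbn := hL.1 b hbL
  have hcn := hL.1 c hcL
  have hp0 : 0 ≤ b i := hbn i
  have hq0 : 0 ≤ b j := hbn j
  have hr0 : 0 ≤ c i := hcn i
  have hs0 : 0 ≤ c j := hcn j
  -- determinant nonzero
  have hps : b i * c j - b j * c i ≠ 0 := by
    intro h0
    have hlin : (c j) • b + (-(b j)) • c = 0 := by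
      funext p
      by_cases hpi : p = i
      · subst hpi
        simp only [Pi.add_apply, Pi.smul_apply, smul_eq_mul, Pi.zero_apply]
        nlinarith [h0]
      · by_cases hpj : p = j
        · subst hpj
          simp only [Pi.add_apply, Pi.smul_apply, smul_eq_mul, Pi.zero_apply]
          ring
        · simp only [Pi.add_apply, Pi.smul_apply, smul_eq_mul, Pi.zero_apply,
            hbs p hpi hpj, hcs p hpi hpj]
          ring
    have := (LinearIndependent.pair_iff.1 hR) (c j) (-(b j)) hlin
    have hcj : c j = 0 := this.1
    have hbj : b j = 0 := by have := this.2; linarith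
    rw [hcj, hbj] at hγ
    simp at hγ
  -- positivity of α and β
  have hor : 0 < b i ∨ 0 < c i := by
    by_contra hcon
    push_neg at hcon
    have h1 : b i = 0 := le_antisymm hcon.1 hp0
    have h2 : c i = 0 := le_antisymm hcon.2 hr0
    rw [h1, h2] at hγ
    simp at hγ
  have hor' : 0 < b j ∨ 0 < c j := by
    by_contra hcon
    push_neg at hcon
    have h1 : b j = 0 := le_antisymm hcon.1 hq0
    have h2 : c j = 0 := le_antisymm hcon.2 hs0
    rw [h1, h2] at hγ
    simp at hγ
  have hα : 0 < b i ^ 2 + c i ^ 2 := by rcases hor with h | h <;> nlinarith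
  have hβ : 0 < b j ^ 2 + c j ^ 2 := by rcases hor' with h | h <;> nlinarith
  have hδ : 0 < (b i * c j - b j * c i)^2 := by positivity
  have hid : (b i ^ 2 + c i ^ 2) * (b j ^ 2 + c j ^ 2) =
      (b i * b j + c i * c j)^2 + (b i * c j - b j * c i)^2 := by ring
  set α := b i ^ 2 + c i ^ 2 with hαd
  set β := b j ^ 2 + c j ^ 2 with hβd
  set γ := b i * b j + c i * c j with hγd
  set δ := (b i * c j - b j * c i)^2 with hδd
  have hsα : (0:ℝ) < Real.sqrt α := Real.sqrt_pos.2 hα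
  have hsβ : (0:ℝ) < Real.sqrt β := Real.sqrt_pos.2 hβ
  have hsδ : (0:ℝ) < Real.sqrt δ := Real.sqrt_pos.2 hδ
  set u : Fin n → ℝ := fun t => if t = i then Real.sqrt α else if t = j then γ / Real.sqrt α else 0 with hu
  set v : Fin n → ℝ := fun t => if t = j then Real.sqrt δ / Real.sqrt α else 0 with hv
  set u' : Fin n → ℝ := fun t => if t = i then γ / Real.sqrt β else if t = j then Real.sqrt β else 0 with hu'
  set v' : Fin n → ℝ := fun t => if t = i then Real.sqrt δ / Real.sqrt β else 0 with hv'
  have hαval : Real.sqrt α * Real.sqrt α = α := Real.mul_self_sqrt (le_of_lt hα)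
  have hβval : Real.sqrt β * Real.sqrt β = β := Real.mul_self_sqrt (le_of_lt hβ)
  have hδval : Real.sqrt δ * Real.sqrt δ = δ := Real.mul_self_sqrt (le_of_lt hδ)
  have hui : u i = Real.sqrt α := by simp [hu]
  have huj : u j = γ / Real.sqrt α := by simp [hu, Ne.symm hij]
  have hvi : v i = 0 := by simp [hv, hij]
  have hvj : v j = Real.sqrt δ / Real.sqrt α := by simp [hv]
  have hu'i : u' i = γ / Real.sqrt β := by simp [hu']
  have hu'j : u' j = Real.sqrt β := by simp [hu', Ne.symm hij]
  have hv'i : v' i = Real.sqrt δ / Real.sqrt β := by simp [hv']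
  have hv'j : v' j = 0 := by simp [hv', Ne.symm hij]
  -- block sums
  have hblock : ∀ (w₁ w₂ : Fin n → ℝ),
      (w₁ i * w₁ i + w₂ i * w₂ i = α) → (w₁ i * w₁ j + w₂ i * w₂ j = γ) →
      (w₁ j * w₁ j + w₂ j * w₂ j = β) →
      (∀ p, p ≠ i → p ≠ j → w₁ p = 0) → (∀ p, p ≠ i → p ≠ j → w₂ p = 0) →
      vecMulVec w₁ w₁ + vecMulVec w₂ w₂ = vecMulVec b b + vecMulVec c c := by
    intro w₁ w₂ hii hij' hjj hw₁ hw₂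
    have hent : ∀ z z', w₁ z * w₁ z' + w₂ z * w₂ z' = b z * b z' + c z * c z' := by
      intro z z'
      by_cases hzi : z = i
      · by_cases hz'i : z' = i
        · rw [hzi, hz'i]; linear_combination hii + hαd
        · by_cases hz'j : z' = j
          · rw [hzi, hz'j]; linear_combination hij' + hγd
          · rw [hw₁ z' hz'i hz'j, hw₂ z' hz'i hz'j, hbs z' hz'i hz'j, hcs z' hz'i hz'j]; ring
      · by_cases hzj : z = j
        · by_cases hz'i : z' = i
          · rw [hzj, hz'i]; linear_combination hij' + hγd
          · by_cases hz'j : z' = j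
            · rw [hzj, hz'j]; linear_combination hjj + hβd
            · rw [hw₁ z' hz'i hz'j, hw₂ z' hz'i hz'j, hbs z' hz'i hz'j, hcs z' hz'i hz'j]; ring
        · rw [hw₁ z hzi hzj, hw₂ z hzi hzj, hbs z hzi hzj, hcs z hzi hzj]; ring
    ext z z'
    simp only [Matrix.add_apply, vecMulVec_apply]
    exact hent z z'
  have hlow : vecMulVec u u + vecMulVec v v = vecMulVec b b + vecMulVec c c := by
    apply hblock
    · rw [hui, hvi, hαval]; ring
    · rw [hui, hvi, huj]; field_simp; ring
    · rw [huj, hvj, div_mul_div_comm, div_mul_div_comm, hαval, hδval, ← add_div,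
        div_eq_iff (ne_of_gt hα)]
      linear_combination hid
    · intro p hpi hpj; simp [hu, hpi, hpj]
    · intro p hpi hpj; simp [hv, hpj]
  have hup : vecMulVec u' u' + vecMulVec v' v' = vecMulVec b b + vecMulVec c c := by
    apply hblock
    · rw [hu'i, hv'i, div_mul_div_comm, div_mul_div_comm, hβval, hδval, ← add_div,
        div_eq_iff (ne_of_gt hβ)]
      linear_combination hid
    · rw [hu'i, hu'j, hv'j]; field_simp; ring
    · rw [hu'j, hv'j, hβval]; ring
    · intro p hpi hpj; simp [hu', hpi, hpj]
    · intro p hpi hpj; simp [hv', hpi]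
  -- split L
  have hcL' : c ∈ L.erase b := (Multiset.mem_erase_of_ne (Ne.symm hbc)).2 hcL
  set L₀ := (L.erase b).erase c with hL₀d
  have hsplit : L = b ::ₘ c ::ₘ L₀ := by
    rw [hL₀d, Multiset.cons_erase hcL', Multiset.cons_erase hbL]
  have hmemL : ∀ d ∈ L₀, d ∈ L := by
    intro d hd
    rw [hsplit]
    exact Multiset.mem_cons.2 (Or.inr (Multiset.mem_cons.2 (Or.inr hd)))
  -- main helper
  have hmain : ∀ w₁ w₂ : Fin n → ℝ,
      vecMulVec w₁ w₁ + vecMulVec w₂ w₂ = vecMulVec b b + vecMulVec c c →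
      (∀ p, 0 ≤ w₁ p) → (∀ p, 0 ≤ w₂ p) → w₁ ≠ 0 → w₂ ≠ 0 →
      (w₁ ::ₘ w₂ ::ₘ L₀) ≠ L →
      ∃ L₁ L₂ : Multiset (Fin n → ℝ), L₁ ≠ L₂ ∧
        (IsCPRep A L₁ ∧ Multiset.card L₁ = cpRank A) ∧
        (IsCPRep A L₂ ∧ Multiset.card L₂ = cpRank A) := by
    intro w₁ w₂ hw hw1n hw2n hw10 hw20 hne
    have hMnn : ∀ d ∈ (w₁ ::ₘ w₂ ::ₘ L₀), ∀ p, 0 ≤ d p := by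
      intro d hd p
      rcases Multiset.mem_cons.1 hd with rfl | hd
      · exact hw1n p
      · rcases Multiset.mem_cons.1 hd with rfl | hd
        · exact hw2n p
        · exact hL.1 d (hmemL d hd) p
    have hMz : ∀ d ∈ (w₁ ::ₘ w₂ ::ₘ L₀), d ≠ 0 := by
      intro d hd
      rcases Multiset.mem_cons.1 hd with rfl | hd
      · exact hw10
      · rcases Multiset.mem_cons.1 hd with rfl | hd
        · exact hw20
        · exact hL.2.1 d (hmemL d hd)
    have hMsum : ((w₁ ::ₘ w₂ ::ₘ L₀).map fun d => vecMulVec d d).sum = A := by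
      have h0 := hL.2.2.2
      rw [hsplit] at h0
      simp only [Multiset.map_cons, Multiset.sum_cons] at h0 ⊢
      rw [← h0, ← add_assoc, ← add_assoc, hw]
    have hMcard : Multiset.card (w₁ ::ₘ w₂ ::ₘ L₀) = cpRank A := by
      rw [← hLcard, hsplit]
      simp
    by_cases hP : (w₁ ::ₘ w₂ ::ₘ L₀).Pairwise (R (n := n))
    · exact ⟨L, w₁ ::ₘ w₂ ::ₘ L₀, fun h => hne h.symm, ⟨hL, hLcard⟩,
        ⟨⟨hMnn, hMz, hP, hMsum⟩, hMcard⟩⟩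
    · exfalso
      obtain ⟨M₂, hc2, hnn2, hsum2⟩ := merge_step hMnn hMz hP
      have hle := cpRank_le_pseudo hnn2 (hsum2.trans hMsum)
      have hck : Multiset.card (w₁ ::ₘ w₂ ::ₘ L₀) = cpRank A := hMcard
      simp only [Multiset.card_cons] at hck hc2
      omega
  -- nonneg and nonzero of the candidates
  have hun : ∀ p, 0 ≤ u p := by
    intro p; simp only [hu]; split_ifs <;> positivity
  have hvn : ∀ p, 0 ≤ v p := by
    intro p; simp only [hv]; split_ifs <;> positivity
  have hu'n : ∀ p, 0 ≤ u' p := by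
    intro p; simp only [hu']; split_ifs <;> positivity
  have hv'n : ∀ p, 0 ≤ v' p := by
    intro p; simp only [hv']; split_ifs <;> positivity
  have hu0 : u ≠ 0 := by
    intro h
    have h2 : u i = 0 := by rw [h]; rfl
    rw [hui] at h2
    exact (ne_of_gt hsα) h2
  have hv0 : v ≠ 0 := by
    intro h
    have h2 : v j = 0 := by rw [h]; rfl
    rw [hvj] at h2
    exact (ne_of_gt (div_pos hsδ hsα)) h2
  have hu'0 : u' ≠ 0 := by
    intro h
    have h2 : u' j = 0 := by rw [h]; rfl
    rw [hu'j] at h2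
    exact (ne_of_gt hsβ) h2
  have hv'0 : v' ≠ 0 := by
    intro h
    have h2 : v' i = 0 := by rw [h]; rfl
    rw [hv'i] at h2
    exact (ne_of_gt (div_pos hsδ hsβ)) h2
  by_cases hch : (u ::ₘ v ::ₘ L₀) = L
  · apply hmain u' v' hup hu'n hv'n hu'0 hv'0
    intro hch'
    have hcc : (u' ::ₘ v' ::ₘ (0 : Multiset (Fin n → ℝ))) + L₀ =
        (u ::ₘ v ::ₘ (0 : Multiset (Fin n → ℝ))) + L₀ := by
      simp only [Multiset.cons_add, zero_add]
      rw [hch', hch]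
    have hpair := add_right_cancel hcc
    have hvmem : v ∈ (u' ::ₘ v' ::ₘ (0 : Multiset (Fin n → ℝ))) := by
      rw [hpair]
      exact Multiset.mem_cons.2 (Or.inr (Multiset.mem_cons_self _ _))
    rcases Multiset.mem_cons.1 hvmem with hvu | hvmem
    · have h1 := congrFun hvu i
      rw [hvi, hu'i] at h1
      have h2 : (0:ℝ) < γ / Real.sqrt β := div_pos hγ hsβ
      rw [← h1] at h2
      exact lt_irrefl 0 h2
    · rcases Multiset.mem_cons.1 hvmem with hvv | hvmem
      · have h1 := congrFun hvv i
        rw [hvi, hv'i] at h1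
        have h2 : (0:ℝ) < Real.sqrt δ / Real.sqrt β := div_pos hsδ hsβ
        rw [← h1] at h2
        exact lt_irrefl 0 h2
      · exact absurd hvmem (Multiset.notMem_zero v)
  · exact hmain u v hlow hun hvn hu0 hv0 hch


end CPAux

/-- If `A` is irreducible completely positive with triangle free graph and `M(A)` is
nonsingular, then `A` has at least two distinct minimal CP factorizations. -/
theorem stmt_10 (n : ℕ) (hn : 2 ≤ n) (A : Matrix (Fin n) (Fin n) ℝ)
    (hCP : IsCP A) (hirr : (matGraph A).Connected) (htf : (matGraph A).CliqueFree 3)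
    (hns : (compMatrix A).det ≠ 0) :
    ∃ L₁ L₂ : Multiset (Fin n → ℝ), L₁ ≠ L₂ ∧ IsMinCPRep A L₁ ∧ IsMinCPRep A L₂ := by
  classical
  obtain ⟨L, hL, hLcard⟩ := CPAux.exists_min_rep hCP
  by_cases hT : ∃ b ∈ L, ∃ c ∈ L, b ≠ c ∧ ∃ i j : Fin n, i ≠ j ∧
      (∀ p, p ≠ i → p ≠ j → b p = 0) ∧ (∀ p, p ≠ i → p ≠ j → c p = 0) ∧
      0 < b i * b j + c i * c j
  · obtain ⟨b, hbL, c, hcL, hbc, i, j, hij, hbs, hcs, hγ⟩ := hT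
    obtain ⟨L₁, L₂, h12, hm1, hm2⟩ := CPAux.case1 hL hLcard hbL hcL hbc hij hbs hcs hγ
    exact ⟨L₁, L₂, h12, hm1, hm2⟩
  · -- Case 2
    have hTn : ∀ b ∈ L, ∀ c ∈ L, b ≠ c → ∀ i j : Fin n, i ≠ j →
        (∀ p, p ≠ i → p ≠ j → b p = 0) → (∀ p, p ≠ i → p ≠ j → c p = 0) →
        ¬(0 < b i * b j + c i * c j) := by
      intro b hb c hc hbc i j hij hbs hcs hpos
      exact hT ⟨b, hb, c, hc, hbc, i, j, hij, hbs, hcs, hpos⟩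
    have hApos : ∀ a b : Fin n, (matGraph A).Adj a b → 0 < A a b := by
      intro a b hab
      rcases hab.2 with h | h
      · exact lt_of_le_of_ne (CPAux.entry_nonneg hL a b) (Ne.symm h)
      · rw [CPAux.entry_symm hL]
        exact lt_of_le_of_ne (CPAux.entry_nonneg hL b a) (Ne.symm h)
    have ex : ∀ a b : Fin n, (matGraph A).Adj a b → ∃ c, c ∈ L ∧ 0 < c a * c b := by
      intro a b hab
      obtain ⟨c, hc, hpos⟩ := CPAux.exists_pos_term hL (hApos a b hab)
      exact ⟨c, hc, hpos⟩
    have hLpos : ∀ d ∈ L, ∀ p, d p ≠ 0 → 0 < d p :=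
      fun d hd p hp => lt_of_le_of_ne (hL.1 d hd p) (Ne.symm hp)
    have hposne : ∀ (d : Fin n → ℝ) (p q : Fin n), 0 < d p * d q → d p ≠ 0 ∧ d q ≠ 0 := by
      intro d p q h
      constructor
      · intro h0; rw [h0, zero_mul] at h; exact lt_irrefl 0 h
      · intro h0; rw [h0, mul_zero] at h; exact lt_irrefl 0 h
    have hs2 : ∀ d ∈ L, ∀ i j p : Fin n, d i ≠ 0 → d j ≠ 0 → i ≠ j →
        p ≠ i → p ≠ j → d p = 0 :=
      fun d hd i j p hi hj hij hpi hpj => CPAux.supp_two htf hL hd hi hj hij hpi hpj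
    have huniq : ∀ (a b' : Fin n), a ≠ b' → ∀ c₁ ∈ L, ∀ c₂ ∈ L,
        0 < c₁ a * c₁ b' → 0 < c₂ a * c₂ b' → c₁ = c₂ := by
      intro a b' hab c₁ h1 c₂ h2 hp1 hp2
      by_contra hne
      obtain ⟨h1a, h1b⟩ := hposne c₁ a b' hp1
      obtain ⟨h2a, h2b⟩ := hposne c₂ a b' hp2
      exact hTn c₁ h1 c₂ h2 hne a b' hab
        (fun p hpa hpb => hs2 c₁ h1 a b' p h1a h1b hab hpa hpb)
        (fun p hpa hpb => hs2 c₂ h2 a b' p h2a h2b hab hpa hpb)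
        (add_pos hp1 hp2)
    have hedge : ∀ d ∈ L, ∃ i j : Fin n, i < j ∧ d i ≠ 0 ∧ d j ≠ 0 := by
      intro d hd
      obtain ⟨i, hi⟩ : ∃ i, d i ≠ 0 := by
        by_contra hc
        push_neg at hc
        exact hL.2.1 d hd (funext hc)
      by_cases h2 : ∃ j, j ≠ i ∧ d j ≠ 0
      · obtain ⟨j, hji, hj⟩ := h2
        rcases lt_or_gt_of_ne hji with h | h
        · exact ⟨j, i, h, hj, hi⟩
        · exact ⟨i, j, h, hi, hj⟩
      · exfalso
        push_neg at h2
        have hvert : ∀ p, p ≠ i → d p = 0 := fun p hp => h2 p hp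
        obtain ⟨w, hw⟩ : ∃ w : Fin n, w ≠ i := by
          rcases eq_or_ne i ⟨0, by omega⟩ with rfl | hi0
          · exact ⟨⟨1, by omega⟩, by simp [Fin.ext_iff]⟩
          · exact ⟨⟨0, by omega⟩, Ne.symm hi0⟩
        obtain ⟨u, hadj⟩ : ∃ u, (matGraph A).Adj i u := by
          obtain ⟨walk⟩ := hirr.preconnected i w
          cases walk with
          | nil => exact absurd rfl hw
          | cons h p => exact ⟨_, h⟩
        obtain ⟨c, hcL2, hcpos⟩ := ex i u hadj
        obtain ⟨hci, hcu⟩ := hposne c i u hcpos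
        have hun : u ≠ i := Ne.symm hadj.ne
        have hdc : d ≠ c := by
          intro h
          exact hcu (by rw [← h]; exact hvert u hun)
        exact hTn d hd c hcL2 hdc i u hadj.ne
          (fun p hpi _ => hvert p hpi)
          (fun p hpi hpu => hs2 c hcL2 i u p hci hcu hadj.ne hpi hpu)
          (by rw [hvert u hun, mul_zero, zero_add]; exact hcpos)
    have hLn : L.Nodup := (CPAux.pairwise_iff.1 hL.2.2.1).1
    have hRall : ∀ b ∈ L, ∀ c ∈ L, b ≠ c → CPAux.R b c := (CPAux.pairwise_iff.1 hL.2.2.1).2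
    set g : Fin n → Fin n → ℝ := fun a b =>
      if h : (matGraph A).Adj a b then
        (Classical.choose (ex a b h)) a / (Classical.choose (ex a b h)) b
      else 1 with hgd
    have hgval : ∀ a b (h : (matGraph A).Adj a b), ∀ c ∈ L, 0 < c a * c b →
        g a b = c a / c b := by
      intro a b h c hc hpos
      obtain ⟨hcm, hcp⟩ := Classical.choose_spec (ex a b h)
      have he := huniq a b h.ne _ hcm c hc hcp hpos
      simp only [hgd]
      rw [dif_pos h, he]
    have hgpos : ∀ a b, 0 < g a b := by
      intro a b
      simp only [hgd]
      split_ifs with h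
      · obtain ⟨hcm, hcp⟩ := Classical.choose_spec (ex a b h)
        obtain ⟨h1, h2⟩ := hposne _ a b hcp
        exact div_pos (hLpos _ hcm _ h1) (hLpos _ hcm _ h2)
      · exact one_pos
    have hg1 : ∀ a b, g a b * g b a = 1 := by
      intro a b
      by_cases h : (matGraph A).Adj a b
      · obtain ⟨hcm, hcp⟩ := Classical.choose_spec (ex b a h.symm)
        obtain ⟨hcb, hca⟩ := hposne _ b a hcp
        have e1 : g a b = (Classical.choose (ex b a h.symm)) a /
            (Classical.choose (ex b a h.symm)) b :=
          hgval a b h _ hcm (by rw [mul_comm]; exact hcp)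
        have e2 : g b a = (Classical.choose (ex b a h.symm)) b /
            (Classical.choose (ex b a h.symm)) a := hgval b a h.symm _ hcm hcp
        rw [e1, e2]
        field_simp
      · have h' : ¬ (matGraph A).Adj b a := fun hh => h hh.symm
        simp only [hgd]
        rw [dif_neg h, dif_neg h']
        norm_num
    by_cases hbal : ∀ (v : Fin n) (c : (matGraph A).Walk v v), c.IsCycle → CPAux.wratio g c = 1
    · -- all cycles balanced: M(A) is singular, contradiction
      exfalso
      have hv₀ : ∃ v : Fin n, True := ⟨⟨0, by omega⟩, trivial⟩
      obtain ⟨v₀, -⟩ := hv₀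
      set z : Fin n → ℝ := fun u => CPAux.wratio g ((hirr.preconnected v₀ u).some) with hzd
      have hclosed : ∀ (v : Fin n) (c : (matGraph A).Walk v v), CPAux.wratio g c = 1 :=
        fun v c => CPAux.wratio_closed_eq_one g hg1 hbal c.length v c le_rfl
      have hzne : ∀ u, z u ≠ 0 := fun u => CPAux.wratio_ne_zero g hg1 _
      have hrel : ∀ d ∈ L, ∃ i j : Fin n, i < j ∧ d i ≠ 0 ∧ d j ≠ 0 ∧
          (∀ p, p ≠ i → p ≠ j → d p = 0) ∧ d i * z i = d j * z j := by
        intro d hd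
        obtain ⟨i, j, hij, hdi, hdj⟩ := hedge d hd
        have hsupd : ∀ p, p ≠ i → p ≠ j → d p = 0 :=
          fun p hpi hpj => hs2 d hd i j p hdi hdj (ne_of_lt hij) hpi hpj
        have hadj : (matGraph A).Adj i j :=
          ⟨ne_of_lt hij, Or.inl (ne_of_gt (CPAux.entry_pos_of_term hL hd hdi hdj))⟩
        have hpos : 0 < d i * d j := mul_pos (hLpos d hd i hdi) (hLpos d hd j hdj)
        have hgij : g i j = d i / d j := hgval i j hadj d hd hpos
        have hcw := hclosed j
          ((((hirr.preconnected v₀ j).some.reverse.append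
            ((hirr.preconnected v₀ i).some)).append
            (SimpleGraph.Walk.cons hadj SimpleGraph.Walk.nil)))
        rw [CPAux.wratio_append, CPAux.wratio_append, CPAux.wratio_cons, CPAux.wratio_nil] at hcw
        have hrev := CPAux.wratio_mul_reverse g hg1 ((hirr.preconnected v₀ j).some)
        have hne0 : CPAux.wratio g ((hirr.preconnected v₀ j).some).reverse ≠ 0 :=
          CPAux.wratio_ne_zero g hg1 _
        have h5 : CPAux.wratio g ((hirr.preconnected v₀ i).some) * g i j
            = CPAux.wratio g ((hirr.preconnected v₀ j).some) := by
          apply mul_left_cancel₀ hne0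
          calc CPAux.wratio g ((hirr.preconnected v₀ j).some).reverse *
              (CPAux.wratio g ((hirr.preconnected v₀ i).some) * g i j)
              = CPAux.wratio g ((hirr.preconnected v₀ j).some).reverse *
                CPAux.wratio g ((hirr.preconnected v₀ i).some) * (g i j * 1) := by ring
            _ = 1 := hcw
            _ = CPAux.wratio g ((hirr.preconnected v₀ j).some) *
                CPAux.wratio g ((hirr.preconnected v₀ j).some).reverse := hrev.symm
            _ = CPAux.wratio g ((hirr.preconnected v₀ j).some).reverse *
                CPAux.wratio g ((hirr.preconnected v₀ j).some) := by ring
        refine ⟨i, j, hij, hdi, hdj, hsupd, ?_⟩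
        have hzi : z i = CPAux.wratio g ((hirr.preconnected v₀ i).some) := rfl
        have hzj : z j = CPAux.wratio g ((hirr.preconnected v₀ j).some) := rfl
        rw [hzi, hzj, ← h5, hgij]
        field_simp
      set flp : (Fin n → ℝ) → (Fin n → ℝ) :=
        fun d p => if ∃ q, q < p ∧ d q ≠ 0 then -d p else d p with hflpd
      have hflppm : ∀ d p, flp d p = d p ∨ flp d p = -(d p) := by
        intro d p
        simp only [hflpd]
        split_ifs <;> simp
      have hflpsq : ∀ (d : Fin n → ℝ) p, flp d p * flp d p = d p * d p := by
        intro d p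
        rcases hflppm d p with h | h <;> rw [h] <;> ring
      have hflpval : ∀ d ∈ L, ∀ i j : Fin n, i < j → d i ≠ 0 → d j ≠ 0 →
          flp d i = d i ∧ flp d j = -(d j) := by
        intro d hd i j hij hdi hdj
        constructor
        · simp only [hflpd]
          rw [if_neg]
          rintro ⟨q, hqi, hq⟩
          exact hq (hs2 d hd i j q hdi hdj (ne_of_lt hij) (ne_of_lt hqi)
            (ne_of_lt (lt_trans hqi hij)))
        · simp only [hflpd]
          rw [if_pos ⟨i, hij, hdi⟩]
      have hflpoff : ∀ d ∈ L, ∀ p q : Fin n, p ≠ q →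
          flp d p * flp d q = -(d p * d q) := by
        intro d hd p q hpq
        by_cases hdp : d p = 0
        · rcases hflppm d p with h | h <;> rw [h, hdp] <;> ring
        · by_cases hdq : d q = 0
          · rcases hflppm d q with h | h <;> rw [h, hdq] <;> ring
          · obtain ⟨i, j, hij, hdi, hdj⟩ := hedge d hd
            obtain ⟨hfi, hfj⟩ := hflpval d hd i j hij hdi hdj
            have hpm : p = i ∨ p = j := by
              by_contra hc
              push_neg at hc
              exact hdp (hs2 d hd i j p hdi hdj (ne_of_lt hij) hc.1 hc.2)
            have hqm : q = i ∨ q = j := by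
              by_contra hc
              push_neg at hc
              exact hdq (hs2 d hd i j q hdi hdj (ne_of_lt hij) hc.1 hc.2)
            rcases hpm with rfl | rfl <;> rcases hqm with rfl | rfl
            · exact absurd rfl hpq
            · rw [hfi, hfj]; ring
            · rw [hfi, hfj]; ring
            · exact absurd rfl hpq
      have hMid : compMatrix A = (L.map fun d => vecMulVec (flp d) (flp d)).sum := by
        ext p q
        have hsa : (L.map fun d => vecMulVec (flp d) (flp d)).sum p q
            = (L.map fun d => flp d p * flp d q).sum := by
          have h0 := CPAux.sum_apply (L.map flp) p q
          rw [Multiset.map_map, Multiset.map_map] at h0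
          exact h0
        rw [hsa]
        by_cases hpq : p = q
        · subst hpq
          have h1 : compMatrix A p p = A p p := by
            simp [compMatrix, abs_of_nonneg (CPAux.entry_nonneg hL p p)]
          rw [h1, CPAux.entry hL p p]
          exact (Multiset.map_congr rfl (fun d _ => hflpsq d p)).symm ▸ rfl
        · have h1 : compMatrix A p q = -(A p q) := by
            simp [compMatrix, hpq, abs_of_nonneg (CPAux.entry_nonneg hL p q)]
          rw [h1, CPAux.entry hL p q]
          have h2 : (L.map fun d => flp d p * flp d q) = L.map (fun d => -(d p * d q)) :=
            Multiset.map_congr rfl (fun d hd => hflpoff d hd p q hpq)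
          rw [h2]
          rw [show (L.map fun d => -(d p * d q))
              = (L.map (fun d => d p * d q)).map Neg.neg by rw [Multiset.map_map]; rfl]
          rw [Multiset.sum_map_neg']
      have hterm : ∀ d ∈ L, vecMulVec (flp d) (flp d) *ᵥ z = 0 := by
        intro d hd
        obtain ⟨i, j, hij, hdi, hdj, hsupd, hzrel⟩ := hrel d hd
        obtain ⟨hfi, hfj⟩ := hflpval d hd i j hij hdi hdj
        have hdotz : ∑ q, flp d q * z q = 0 := by
          rw [← Finset.sum_subset (Finset.subset_univ ({i, j} : Finset (Fin n)))]
          · rw [Finset.sum_pair (ne_of_lt hij), hfi, hfj]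
            linarith [hzrel]
          · intro q _ hq
            simp only [Finset.mem_insert, Finset.mem_singleton] at hq
            push_neg at hq
            have hdq : d q = 0 := hsupd q hq.1 hq.2
            rcases hflppm d q with h | h <;> rw [h, hdq] <;> ring
        ext p
        simp only [Matrix.mulVec, dotProduct, vecMulVec_apply, Pi.zero_apply]
        calc ∑ q, flp d p * flp d q * z q = flp d p * ∑ q, flp d q * z q := by
              rw [Finset.mul_sum]
              exact Finset.sum_congr rfl (fun q _ => by ring)
        _ = 0 := by rw [hdotz, mul_zero]
      have hMz : compMatrix A *ᵥ z = 0 := by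
        rw [hMid]
        have hzero : ∀ (M : Multiset (Fin n → ℝ)),
            (∀ d ∈ M, vecMulVec (flp d) (flp d) *ᵥ z = 0) →
            ((M.map fun d => vecMulVec (flp d) (flp d)).sum) *ᵥ z = 0 := by
          intro M
          induction M using Multiset.induction_on with
          | empty => intro _; simp [Matrix.zero_mulVec]
          | cons a s ih =>
            intro hall
            simp only [Multiset.map_cons, Multiset.sum_cons]
            rw [Matrix.add_mulVec, hall a (Multiset.mem_cons_self a s),
              ih (fun d hd => hall d (Multiset.mem_cons.2 (Or.inr hd))), add_zero]
        exact hzero L hterm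
      have hzne0 : z ≠ 0 := fun h => hzne v₀ (by rw [h]; rfl)
      exact hns (Matrix.exists_mulVec_eq_zero_iff.1 ⟨z, hzne0, hMz⟩)
    · -- some unbalanced cycle: rotate mass around it
      push_neg at hbal
      obtain ⟨v₀, c, hcyc, hwne⟩ := hbal
      set m := c.length with hmd
      have hm3 : 3 ≤ m := hcyc.three_le_length
      have hm0 : 0 < m := by omega
      set s₀ : ℕ → Fin n := c.getVert with hs₀d
      have hs00 : s₀ 0 = v₀ := c.getVert_zero
      have hs0m : s₀ m = v₀ := c.getVert_length
      have hadjt : ∀ t, t < m → (matGraph A).Adj (s₀ t) (s₀ (t+1)) :=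
        fun t ht => c.adj_getVert_succ ht
      have hinj : ∀ t r, 1 ≤ t → t ≤ m → 1 ≤ r → r ≤ m → s₀ t = s₀ r → t = r := by
        have hsup := CPAux.walk_support_map c
        have htail : c.support.tail = (List.range m).map (fun t => s₀ (t+1)) := by
          rw [hsup, List.range_succ_eq_map, List.map_cons]
          simp only [List.tail_cons, List.map_map]
          apply List.map_congr_left
          intro t _
          simp [Function.comp, hs₀d]
        have hnd := hcyc.support_nodup
        rw [htail] at hnd
        have hinj0 := (List.nodup_map_iff_inj_on List.nodup_range).1 hnd
        intro t r h1t h2t h1r h2r heq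
        have e1 : t - 1 ∈ List.range m := List.mem_range.2 (by omega)
        have e2 : r - 1 ∈ List.range m := List.mem_range.2 (by omega)
        have e3 : t - 1 + 1 = t := by omega
        have e4 : r - 1 + 1 = r := by omega
        have := hinj0 (t-1) e1 (r-1) e2 (by rw [e3, e4]; exact heq)
        omega
      set bv : ℕ → Fin n → ℝ := fun t =>
        if h : t < m then Classical.choose (ex (s₀ t) (s₀ (t+1)) (hadjt t h)) else 0 with hbvd
      have hbvL : ∀ t, t < m → bv t ∈ L := by
        intro t ht
        simp only [hbvd]
        rw [dif_pos ht]
        exact (Classical.choose_spec (ex _ _ (hadjt t ht))).1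
      have hbvpos : ∀ t, t < m → 0 < bv t (s₀ t) * bv t (s₀ (t+1)) := by
        intro t ht
        simp only [hbvd]
        rw [dif_pos ht]
        exact (Classical.choose_spec (ex _ _ (hadjt t ht))).2
      have hx : ∀ t, t < m → 0 < bv t (s₀ t) := by
        intro t ht
        exact hLpos _ (hbvL t ht) _ (hposne _ _ _ (hbvpos t ht)).1
      have hy : ∀ t, t < m → 0 < bv t (s₀ (t+1)) := by
        intro t ht
        exact hLpos _ (hbvL t ht) _ (hposne _ _ _ (hbvpos t ht)).2
      have hsup' : ∀ t, t < m → ∀ p, p ≠ s₀ t → p ≠ s₀ (t+1) → bv t p = 0 := by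
        intro t ht p h1 h2
        exact hs2 _ (hbvL t ht) (s₀ t) (s₀ (t+1)) p (ne_of_gt (hx t ht))
          (ne_of_gt (hy t ht)) (hadjt t ht).ne h1 h2
      have hne' : ∀ t, t < m → s₀ t ≠ s₀ (t+1) := fun t ht => (hadjt t ht).ne
      have hwprod : CPAux.wratio g c =
          (∏ t ∈ Finset.range m, bv t (s₀ t)) / (∏ t ∈ Finset.range m, bv t (s₀ (t+1))) := by
        rw [CPAux.wratio_eq_prod, ← Finset.prod_div_distrib]
        apply Finset.prod_congr rfl
        intro t htm
        have ht := Finset.mem_range.1 htm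
        exact hgval _ _ (hadjt t ht) (bv t) (hbvL t ht) (hbvpos t ht)
      have hX : 0 < ∏ t ∈ Finset.range m, bv t (s₀ t) :=
        Finset.prod_pos (fun t htm => hx t (Finset.mem_range.1 htm))
      have hY : 0 < ∏ t ∈ Finset.range m, bv t (s₀ (t+1)) :=
        Finset.prod_pos (fun t htm => hy t (Finset.mem_range.1 htm))
      have hXYne : (∏ t ∈ Finset.range m, bv t (s₀ t))
          ≠ (∏ t ∈ Finset.range m, bv t (s₀ (t+1))) := by
        intro h
        exact hwne (by rw [hwprod, h, div_self (ne_of_gt hY)])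
      rcases lt_or_gt_of_ne hXYne with hlt | hgt
      · obtain ⟨L₁, L₂, h12, hm1, hm2⟩ := CPAux.rotate_case hL hLcard hLn huniq hRall
          m hm3 s₀ bv (hs00.trans hs0m.symm) hinj hne' hbvL hx hy hsup' hlt
        exact ⟨L₁, L₂, h12, hm1, hm2⟩
      · set s₁ : ℕ → Fin n := fun t => s₀ (m - t) with hs₁d
        set bw : ℕ → Fin n → ℝ := fun t => bv (m - 1 - t) with hbwd
        have he1 : ∀ t, t < m → m - 1 - t + 1 = m - t := by intro t ht; omega
        have he2 : ∀ t, t < m → m - (t+1) = m - 1 - t := by intro t ht; omega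
        have hs₁0m : s₁ 0 = s₁ m := by
          simp only [hs₁d, Nat.sub_zero, Nat.sub_self]
          rw [hs0m, hs00]
        have hinj1 : ∀ t r, 1 ≤ t → t ≤ m → 1 ≤ r → r ≤ m → s₁ t = s₁ r → t = r := by
          intro t r h1t h2t h1r h2r heq
          simp only [hs₁d] at heq
          by_cases htm : t = m <;> by_cases hrm : r = m
          · omega
          · exfalso
            subst htm
            rw [Nat.sub_self] at heq
            have heq2 : s₀ m = s₀ (m - r) := by rw [hs0m, ← hs00]; exact heq
            have := hinj m (m - r) (by omega) le_rfl (by omega) (by omega) heq2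
            omega
          · exfalso
            subst hrm
            rw [Nat.sub_self] at heq
            have heq2 : s₀ (m - t) = s₀ m := by rw [hs0m, ← hs00]; exact heq
            have := hinj (m - t) m (by omega) (by omega) (by omega) le_rfl heq2
            omega
          · have := hinj (m - t) (m - r) (by omega) (by omega) (by omega) (by omega) heq
            omega
        have hne1 : ∀ t, t < m → s₁ t ≠ s₁ (t+1) := by
          intro t ht
          simp only [hs₁d]
          rw [he2 t ht]
          have hne2 := (hadjt (m - 1 - t) (by omega)).ne
          rw [he1 t ht] at hne2
          exact hne2.symm
        have hbwL : ∀ t, t < m → bw t ∈ L := fun t ht => hbvL (m - 1 - t) (by omega)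
        have hx1 : ∀ t, t < m → 0 < bw t (s₁ t) := by
          intro t ht
          simp only [hbwd, hs₁d]
          have h := hy (m - 1 - t) (by omega)
          rw [he1 t ht] at h
          exact h
        have hy1 : ∀ t, t < m → 0 < bw t (s₁ (t+1)) := by
          intro t ht
          simp only [hbwd, hs₁d]
          rw [he2 t ht]
          exact hx (m - 1 - t) (by omega)
        have hsup1 : ∀ t, t < m → ∀ p, p ≠ s₁ t → p ≠ s₁ (t+1) → bw t p = 0 := by
          intro t ht p h1 h2
          simp only [hbwd]
          simp only [hs₁d] at h1 h2
          rw [he2 t ht] at h2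
          rw [← he1 t ht] at h1
          exact hsup' (m - 1 - t) (by omega) p h2 h1
        have hprod1 : ∏ t ∈ Finset.range m, bw t (s₁ t)
            = ∏ t ∈ Finset.range m, bv t (s₀ (t+1)) := by
          rw [← Finset.prod_range_reflect (fun t => bv t (s₀ (t+1))) m]
          apply Finset.prod_congr rfl
          intro t htm
          have ht := Finset.mem_range.1 htm
          simp only [hbwd, hs₁d]
          rw [he1 t ht]
        have hprod2 : ∏ t ∈ Finset.range m, bw t (s₁ (t+1))
            = ∏ t ∈ Finset.range m, bv t (s₀ t) := by
          rw [← Finset.prod_range_reflect (fun t => bv t (s₀ t)) m]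
          apply Finset.prod_congr rfl
          intro t htm
          have ht := Finset.mem_range.1 htm
          simp only [hbwd, hs₁d]
          rw [he2 t ht]
        obtain ⟨L₁, L₂, h12, hm1, hm2⟩ := CPAux.rotate_case hL hLcard hLn huniq hRall
          m hm3 s₁ bw hs₁0m hinj1 hne1 hbwL hx1 hy1 hsup1
          (by rw [hprod1, hprod2]; exact hgt)
        exact ⟨L₁, L₂, h12, hm1, hm2⟩
end

section
/- Let A be an n×n nonsingular positive semidefinite nonnegative matrix whose graph is bipartite. Then for every index i there exists δ > 0 (namely δ = det A / det A(i)) such that A − δE_{ii} is positive semidefinite, singular, nonnegative, and has the same graph as A. -/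
open Matrix

noncomputable def myEquiv {n : ℕ} (i : Fin n) : {j : Fin n // j ≠ i} ⊕ Unit ≃ Fin n where
  toFun := Sum.elim Subtype.val (fun _ => i)
  invFun j := if h : j = i then Sum.inr () else Sum.inl ⟨j, h⟩
  left_inv := by
    rintro (⟨j, hj⟩ | ⟨⟩)
    · simp [hj]
    · simp
  right_inv := fun j => by by_cases h : j = i <;> simp [h]

lemma det_minor {n : ℕ} (A : Matrix (Fin n) (Fin n) ℝ) (i : Fin n) :
    (A.updateRow i (Pi.single i 1)).det =
      (A.submatrix (fun x : {j : Fin n // j ≠ i} => (x : Fin n))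
        (fun x : {j : Fin n // j ≠ i} => (x : Fin n))).det := by
  set M := A.updateRow i (Pi.single i 1) with hM
  have h1 : M.submatrix (myEquiv i) (myEquiv i) =
      fromBlocks
        (A.submatrix (fun x : {j : Fin n // j ≠ i} => (x : Fin n))
          (fun x : {j : Fin n // j ≠ i} => (x : Fin n)))
        (fun x _ => A (x : Fin n) i) 0 1 := by
    ext a b
    rcases a with ⟨x, hx⟩ | _ <;> rcases b with ⟨y, hy⟩ | _
    · simp [hM, myEquiv, fromBlocks, updateRow_apply, hx]
    · simp [hM, myEquiv, fromBlocks, updateRow_apply, hx]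
    · simp [hM, myEquiv, fromBlocks, Pi.single_eq_of_ne hy]
    · simp [hM, myEquiv, fromBlocks, Matrix.one_apply]
  rw [← det_submatrix_equiv_self (myEquiv i) M, h1]
  exact (det_fromBlocks_zero₂₁ _ _ _).trans (by simp)


/-- If `A` is nonsingular PSD nonnegative with bipartite graph, then for every `i`,
`δ = det A / det A(i) > 0` makes `A - δ Eᵢᵢ` PSD, singular, nonnegative, with the
same graph as `A`. -/
theorem stmt_13 (n : ℕ) (A : Matrix (Fin n) (Fin n) ℝ)
    (hns : A.det ≠ 0) (hpsd : A.PosSemidef) (hApos : ∀ i j, 0 ≤ A i j)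
    (hbip : (matGraph A).Colorable 2) :
    ∀ i : Fin n, ∃ δ : ℝ,
      δ = A.det / (A.submatrix (fun x : {j : Fin n // j ≠ i} => (x : Fin n))
            (fun x : {j : Fin n // j ≠ i} => (x : Fin n))).det ∧
      0 < δ ∧
      (A - δ • Matrix.single i i (1 : ℝ)).PosSemidef ∧
      (A - δ • Matrix.single i i (1 : ℝ)).det = 0 ∧
      (∀ j l, 0 ≤ (A - δ • Matrix.single i i (1 : ℝ)) j l) ∧
      matGraph (A - δ • Matrix.single i i (1 : ℝ)) = matGraph A := by
  intro i
  set P := A.submatrix (fun x : {j : Fin n // j ≠ i} => (x : Fin n))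
      (fun x : {j : Fin n // j ≠ i} => (x : Fin n)) with hP
  have hu : IsUnit A.det := isUnit_iff_ne_zero.mpr hns
  -- A is positive definite
  have hApd : A.PosDef := by
    refine posDef_iff_dotProduct_mulVec.mpr
      ⟨hpsd.1, fun x hx => lt_of_le_of_ne (hpsd.dotProduct_mulVec_nonneg x) fun h0 => hx ?_⟩
    have hAx : A *ᵥ x = 0 := (hpsd.dotProduct_mulVec_zero_iff x).mp h0.symm
    have hxx : A⁻¹ *ᵥ (A *ᵥ x) = x := by
      rw [mulVec_mulVec, nonsing_inv_mul A hu, one_mulVec]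
    rw [hAx, mulVec_zero] at hxx
    exact hxx.symm
  have hdetA : 0 < A.det := hApd.det_pos
  have hBpd : A⁻¹.PosDef := hApd.inv
  have hBii : 0 < A⁻¹ i i := by
    have h := hBpd.dotProduct_mulVec_pos (x := Pi.single i 1) (by
      intro h; simpa using congrFun h i)
    simpa [mulVec_single, single_dotProduct] using h
  have hBne : A⁻¹ i i ≠ 0 := ne_of_gt hBii
  -- det P = det A * A⁻¹ i i
  have hdetP : P.det = A.det * A⁻¹ i i := by
    have h1 : P.det = A.adjugate i i := by rw [adjugate_apply, det_minor, hP]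
    have h2 : A⁻¹ i i = (A.det)⁻¹ * A.adjugate i i := by
      have := congrFun (congrFun (Matrix.inv_def A) i) i
      simpa [Ring.inverse_eq_inv'] using this
    rw [h1, h2]
    field_simp
  have hdetPpos : 0 < P.det := by rw [hdetP]; positivity
  set δ := A.det / P.det with hδ
  have hδpos : 0 < δ := by positivity
  have hδB : δ * A⁻¹ i i = 1 := by
    rw [hδ, hdetP, div_mul_eq_mul_div]
    exact div_self (by positivity)
  -- determinant formula
  have hkey : ∀ c : ℝ, (A - c • Matrix.single i i (1 : ℝ)).det
      = A.det - c * P.det := by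
    intro c
    have hrow : A - c • Matrix.single i i (1 : ℝ) =
        A.updateRow i (A i + (-c) • (Pi.single i 1 : Fin n → ℝ)) := by
      ext j l
      by_cases hj : j = i
      · subst hj
        simp [updateRow_apply, Matrix.single, Pi.single_apply, eq_comm]
        rw [sub_eq_add_neg]
      · simp [updateRow_apply, hj, Matrix.single, Ne.symm hj]
    rw [hrow, det_updateRow_add, det_updateRow_smul, updateRow_eq_self, det_minor, ← hP]
    ring
  have hdet0 : (A - δ • Matrix.single i i (1 : ℝ)).det = 0 := by
    rw [hkey δ, hδ, div_mul_cancel₀ _ (ne_of_gt hdetPpos), sub_self]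
  -- transpose symmetry
  have hAT : Aᵀ = A := by rw [← conjTranspose_eq_transpose_of_trivial]; exact hpsd.1
  have hsymm : ∀ j l, A j l = A l j := fun j l => congrFun (congrFun hAT l) j
  -- the kernel vector
  set v := A⁻¹ *ᵥ (Pi.single i 1 : Fin n → ℝ) with hv
  have hAv : A *ᵥ v = (Pi.single i 1 : Fin n → ℝ) := by
    rw [hv, mulVec_mulVec, mul_nonsing_inv A hu, one_mulVec]
  have hvi : v i = A⁻¹ i i := by simp [hv, mulVec_single]
  -- positive semidefiniteness
  have hpsd' : (A - δ • Matrix.single i i (1 : ℝ)).PosSemidef := by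
    refine Matrix.PosSemidef.of_dotProduct_mulVec_nonneg ?_ ?_
    · ext j l
      simp only [conjTranspose_apply, Matrix.sub_apply, Matrix.smul_apply, Matrix.single, of_apply,
        star_trivial, smul_eq_mul]
      rw [hsymm l j]
      simp [and_comm]
    · intro x
      set t := δ * x i with ht
      have h1 : x ⬝ᵥ (A *ᵥ v) = x i := by rw [hAv]; simp [dotProduct_single]
      have h2 : v ⬝ᵥ (A *ᵥ x) = x i := by
        rw [dotProduct_mulVec, ← mulVec_transpose, hAT, hAv, single_dotProduct, one_mul]
      have h3 : v ⬝ᵥ (A *ᵥ v) = A⁻¹ i i := by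
        rw [hAv, dotProduct_single, mul_one, hvi]
      have hE : (Matrix.single i i (1 : ℝ)) *ᵥ x
          = (x i) • (Pi.single i 1 : Fin n → ℝ) := by
        ext j
        simp [single_mulVec, Function.update_apply, Pi.single_apply, mul_comm]
      have key : star x ⬝ᵥ ((A - δ • Matrix.single i i (1 : ℝ)) *ᵥ x)
          = star (x - t • v) ⬝ᵥ (A *ᵥ (x - t • v)) := by
        simp only [star_trivial, sub_mulVec, smul_mulVec, hE, mulVec_sub, mulVec_smul,
          dotProduct_sub, sub_dotProduct, smul_dotProduct, dotProduct_smul, smul_eq_mul,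
          dotProduct_single, mul_one, h1, h2, h3]
        have hthis : t * (t * A⁻¹ i i) = t * x i := by
          rw [ht]
          calc δ * x i * (δ * x i * A⁻¹ i i) = (δ * A⁻¹ i i) * (δ * (x i * x i)) := by ring
            _ = δ * (x i * x i) := by rw [hδB, one_mul]
            _ = δ * x i * x i := by ring
        linear_combination (-1 : ℝ) * hthis + (x i) * ht
      rw [key]
      exact hpsd.dotProduct_mulVec_nonneg _
  -- nonnegativity of entries
  have hnonneg : ∀ j l, 0 ≤ (A - δ • Matrix.single i i (1 : ℝ)) j l := by
    intro j l
    by_cases hj : i = j ∧ i = l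
    · obtain ⟨hj1, hj2⟩ := hj
      subst hj1; subst hj2
      have h := hpsd'.dotProduct_mulVec_nonneg (Pi.single i 1)
      simpa [mulVec_single, single_dotProduct] using h
    · have heq : (A - δ • Matrix.single i i (1 : ℝ)) j l = A j l := by
        simp [Matrix.sub_apply, Matrix.smul_apply, Matrix.single, hj]
      rw [heq]; exact hApos j l
  -- same graph
  have hoff : ∀ j l, j ≠ l → (A - δ • Matrix.single i i (1 : ℝ)) j l = A j l := by
    intro j l hjl
    have hc : ¬(i = j ∧ i = l) := fun ⟨ha, hb⟩ => hjl (ha.symm.trans hb)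
    simp [Matrix.sub_apply, Matrix.smul_apply, Matrix.single, hc]
  have hgraph : matGraph (A - δ • Matrix.single i i (1 : ℝ)) = matGraph A := by
    ext j l
    constructor
    · rintro ⟨hne, h⟩
      exact ⟨hne, by rwa [hoff j l hne, hoff l j (Ne.symm hne)] at h⟩
    · rintro ⟨hne, h⟩
      exact ⟨hne, by rwa [hoff j l hne, hoff l j (Ne.symm hne)]⟩
  exact ⟨δ, by rw [hδ], hδpos, hpsd', hdet0, hnonneg, hgraph⟩
end

section
/- Let M be an n×n exceptional extremal copositive matrix having exactly n representative minimal zeros w₁,…,w_n that span ℝⁿ, and let W = [w₁ ⋯ w_n]. Then every completely positive matrix A with ⟨A, M⟩ = 0 has the form A = WCW^T for some n×n completely positive C with cp-rank(A) = cp-rank(C), and the CP factorizations B ↦ W^{-1}B give a bijection between CP factorizations of A and of C. -/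
open Matrix

section AuxStmt17
variable {n : ℕ}

private lemma multiset_pairwise_map' {α β : Type*} {r : α → α → Prop} {s : β → β → Prop}
    (f : α → β) (hrs : ∀ a b, r a b → s (f a) (f b)) {m : Multiset α} (h : m.Pairwise r) :
    (m.map f).Pairwise s := by
  obtain ⟨l, hl, hp⟩ := h
  exact ⟨l.map f, by rw [hl]; simp, List.Pairwise.map f hrs hp⟩

private lemma trace_vmv_mul (b : Fin n → ℝ) (M : Matrix (Fin n) (Fin n) ℝ) :
    Matrix.trace (vecMulVec b b * M) = b ⬝ᵥ (M *ᵥ b) := by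
  simp only [Matrix.trace, Matrix.diag, Matrix.mul_apply, vecMulVec_apply, dotProduct,
    Matrix.mulVec, Finset.mul_sum]
  rw [Finset.sum_comm]
  exact Finset.sum_congr rfl fun j _ => Finset.sum_congr rfl fun i _ => by ring

private lemma vmv_mulVec (P : Matrix (Fin n) (Fin n) ℝ) (b : Fin n → ℝ) :
    vecMulVec (P *ᵥ b) (P *ᵥ b) = P * vecMulVec b b * Pᵀ := by
  ext i j
  simp only [Matrix.mul_apply, vecMulVec_apply, Matrix.mulVec, dotProduct,
    Matrix.transpose_apply, Finset.sum_mul, Finset.mul_sum]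
  exact Finset.sum_congr rfl fun l _ => Finset.sum_congr rfl fun k _ => by ring

private lemma sum_map_conj (L : Multiset (Fin n → ℝ)) (P Q : Matrix (Fin n) (Fin n) ℝ)
    (f : (Fin n → ℝ) → Matrix (Fin n) (Fin n) ℝ) :
    (L.map fun b => P * f b * Q).sum = P * (L.map f).sum * Q := by
  induction L using Multiset.induction with
  | empty => simp
  | cons a s ih => simp [ih, Matrix.mul_add, Matrix.add_mul]

private noncomputable def mulVecEquiv (P : Matrix (Fin n) (Fin n) ℝ) (hP : P.det ≠ 0) :
    (Fin n → ℝ) ≃ₗ[ℝ] (Fin n → ℝ) :=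
  LinearEquiv.ofLinear P.mulVecLin P⁻¹.mulVecLin
    (by rw [← Matrix.mulVecLin_mul, Matrix.mul_nonsing_inv _ (isUnit_iff_ne_zero.2 hP)]; simp)
    (by rw [← Matrix.mulVecLin_mul, Matrix.nonsing_inv_mul _ (isUnit_iff_ne_zero.2 hP)]; simp)

private lemma li_map (P : Matrix (Fin n) (Fin n) ℝ) (hP : P.det ≠ 0) {b c : Fin n → ℝ}
    (h : LinearIndependent ℝ ![b, c]) : LinearIndependent ℝ ![P *ᵥ b, P *ᵥ c] := by
  have h2 := h.map' (mulVecEquiv P hP).toLinearMap (mulVecEquiv P hP).ker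
  have he : ⇑(mulVecEquiv P hP).toLinearMap ∘ ![b, c] = ![P *ᵥ b, P *ᵥ c] := by
    funext i; fin_cases i <;> rfl
  rwa [he] at h2

private lemma cprep_mulVec (P : Matrix (Fin n) (Fin n) ℝ) (hP : P.det ≠ 0)
    {A : Matrix (Fin n) (Fin n) ℝ} {L : Multiset (Fin n → ℝ)}
    (hL : IsCPRep A L) (hnn : ∀ b ∈ L, ∀ i, 0 ≤ (P *ᵥ b) i) :
    IsCPRep (P * A * Pᵀ) (L.map fun b => P *ᵥ b) := by
  obtain ⟨h1, h2, h3, h4⟩ := hL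
  refine ⟨?_, ?_, ?_, ?_⟩
  · intro b hb i
    obtain ⟨a, ha, rfl⟩ := Multiset.mem_map.1 hb
    exact hnn a ha i
  · intro b hb
    obtain ⟨a, ha, rfl⟩ := Multiset.mem_map.1 hb
    intro hz
    apply h2 a ha
    have hia : P⁻¹ *ᵥ (P *ᵥ a) = a := by
      rw [Matrix.mulVec_mulVec, Matrix.nonsing_inv_mul _ (isUnit_iff_ne_zero.2 hP),
        Matrix.one_mulVec]
    rw [← hia, hz, Matrix.mulVec_zero]
  · exact multiset_pairwise_map' _ (fun a b h => li_map P hP h) h3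
  · rw [Multiset.map_map]
    have hc : ((fun b => vecMulVec b b) ∘ fun b => P *ᵥ b) =
        fun b => P * vecMulVec b b * Pᵀ := by
      funext b; exact vmv_mulVec P b
    rw [hc, sum_map_conj, h4]

end AuxStmt17

/-- Factorizations through the zeros of a copositive matrix: if `M` is copositive with
zeros `w₁, …, w_n` (columns of the nonsingular `W`) such that every zero of `M` is a
nonnegative combination of the `wⱼ`, then every completely positive `A` orthogonal to `M`
is `A = WCWᵀ` with `C` completely positive, `cpRank A = cpRank C`, and `b ↦ W⁻¹b` gives a
bijection between CP factorizations of `A` and of `C`. -/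
theorem stmt_17 (n : ℕ) (M A W : Matrix (Fin n) (Fin n) ℝ) (w : Fin n → (Fin n → ℝ))
    (hW : W = Matrix.of fun i j => w j i) (hWns : W.det ≠ 0)
    (hcop : ∀ x : Fin n → ℝ, (∀ i, 0 ≤ x i) → 0 ≤ x ⬝ᵥ (M *ᵥ x))
    (hzeros : ∀ j, (∀ i, 0 ≤ w j i) ∧ w j ≠ 0 ∧ (w j) ⬝ᵥ (M *ᵥ (w j)) = 0)
    (hcomb : ∀ b : Fin n → ℝ, (∀ i, 0 ≤ b i) → b ⬝ᵥ (M *ᵥ b) = 0 →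
      ∃ c : Fin n → ℝ, (∀ i, 0 ≤ c i) ∧ b = W *ᵥ c)
    (hCP : IsCP A) (horth : Matrix.trace (A * M) = 0) :
    ∃ C : Matrix (Fin n) (Fin n) ℝ, IsCP C ∧ A = W * C * Wᵀ ∧ cpRank A = cpRank C ∧
      Set.BijOn (fun L : Multiset (Fin n → ℝ) => L.map (fun b => W⁻¹ *ᵥ b))
        {L | IsCPRep A L} {L | IsCPRep C L} := by
  have hWu : IsUnit W.det := isUnit_iff_ne_zero.2 hWns
  have hWinv_det : W⁻¹.det ≠ 0 := by
    rw [Matrix.det_nonsing_inv, Ring.inverse_eq_inv']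
    exact inv_ne_zero hWns
  -- every vector in a CP rep of A is a zero of M
  have hzeroL : ∀ L : Multiset (Fin n → ℝ), IsCPRep A L → ∀ b ∈ L, b ⬝ᵥ (M *ᵥ b) = 0 := by
    intro L hL b hb
    obtain ⟨h1, h2, h3, h4⟩ := hL
    have hsum : (L.map fun b => b ⬝ᵥ (M *ᵥ b)).sum = 0 := by
      have htr : Matrix.trace (A * M) = (L.map fun b => b ⬝ᵥ (M *ᵥ b)).sum := by
        rw [← h4, ← Multiset.sum_map_mul_right, Matrix.trace_multiset_sum, Multiset.map_map]
        congr 1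
        exact Multiset.map_congr rfl fun a _ => trace_vmv_mul a M
      rw [← htr, horth]
    have hnn : ∀ x ∈ L.map (fun b => b ⬝ᵥ (M *ᵥ b)), (0:ℝ) ≤ x := by
      intro x hx
      obtain ⟨a, ha, rfl⟩ := Multiset.mem_map.1 hx
      exact hcop a (h1 a ha)
    have hle := Multiset.single_le_sum hnn _ (Multiset.mem_map_of_mem _ hb)
    have hge := hnn _ (Multiset.mem_map_of_mem _ hb)
    rw [hsum] at hle
    linarith
  have fg : ∀ b : Fin n → ℝ, W⁻¹ *ᵥ (W *ᵥ b) = b := fun b => by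
    rw [Matrix.mulVec_mulVec, Matrix.nonsing_inv_mul _ hWu, Matrix.one_mulVec]
  have gf : ∀ b : Fin n → ℝ, W *ᵥ (W⁻¹ *ᵥ b) = b := fun b => by
    rw [Matrix.mulVec_mulVec, Matrix.mul_nonsing_inv _ hWu, Matrix.one_mulVec]
  have hWinvb : ∀ L, IsCPRep A L → ∀ b ∈ L, ∀ i, 0 ≤ (W⁻¹ *ᵥ b) i := by
    intro L hL b hb i
    obtain ⟨c, hcnn, hbc⟩ := hcomb b (hL.1 b hb) (hzeroL L hL b hb)
    have hcb : W⁻¹ *ᵥ b = c := by rw [hbc, fg]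
    rw [hcb]; exact hcnn i
  have hWb : ∀ c : Fin n → ℝ, (∀ i, 0 ≤ c i) → ∀ i, 0 ≤ (W *ᵥ c) i := by
    intro c hc i
    have hv : (W *ᵥ c) i = ∑ j, w j i * c j := by
      rw [hW]; simp [Matrix.mulVec, dotProduct]
    rw [hv]
    exact Finset.sum_nonneg fun j _ => mul_nonneg ((hzeros j).1 i) (hc j)
  set C : Matrix (Fin n) (Fin n) ℝ := W⁻¹ * A * W⁻¹ᵀ with hC
  have fwd : ∀ L, IsCPRep A L → IsCPRep C (L.map fun b => W⁻¹ *ᵥ b) :=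
    fun L hL => cprep_mulVec W⁻¹ hWinv_det hL (fun b hb => hWinvb L hL b hb)
  have hA : A = W * C * Wᵀ := by
    have h1 : W * W⁻¹ = 1 := Matrix.mul_nonsing_inv _ hWu
    have h2 : Wᵀ⁻¹ * Wᵀ = 1 :=
      Matrix.nonsing_inv_mul _ (by rwa [Matrix.det_transpose, isUnit_iff_ne_zero])
    calc A = (W * W⁻¹) * A * (Wᵀ⁻¹ * Wᵀ) := by rw [h1, h2]; simp
    _ = W * C * Wᵀ := by
        rw [hC, Matrix.transpose_nonsing_inv]
        simp only [Matrix.mul_assoc]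
  have bwd : ∀ L', IsCPRep C L' → IsCPRep A (L'.map fun b => W *ᵥ b) := by
    intro L' hL'
    have h := cprep_mulVec W hWns hL' (fun b hb => hWb b (hL'.1 b hb))
    rwa [← hA] at h
  have hrank : cpRank A = cpRank C := by
    unfold cpRank
    congr 1
    ext k
    constructor
    · rintro ⟨L, hL, rfl⟩
      exact ⟨L.map fun b => W⁻¹ *ᵥ b, fwd L hL, by simp⟩
    · rintro ⟨L, hL, rfl⟩
      exact ⟨L.map fun b => W *ᵥ b, bwd L hL, by simp⟩
  have hinj : Function.Injective fun b : Fin n → ℝ => W⁻¹ *ᵥ b :=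
    Function.LeftInverse.injective gf
  obtain ⟨L0, hL0⟩ := hCP
  refine ⟨C, ⟨_, fwd L0 hL0⟩, hA, hrank, ?_, ?_, ?_⟩
  · intro L hL
    exact fwd L hL
  · intro L1 _ L2 _ heq
    exact Multiset.map_injective hinj heq
  · intro L' hL'
    refine ⟨L'.map fun b => W *ᵥ b, bwd L' hL', ?_⟩
    show ((L'.map fun b => W *ᵥ b).map fun b => W⁻¹ *ᵥ b) = L'
    rw [Multiset.map_map]
    exact (Multiset.map_congr rfl fun x _ => fg x).trans (Multiset.map_id _)
end

section
/- For any completely positive n×n matrix A, the minimal face of the cone CP_n containing A equals the conical hull of { bb^T : b ∈ ℝⁿ₊, A − bb^T ∈ CP_n }. -/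
open Matrix

/-- A face of the cone `CP_n`: a subcone `F` such that `X, Y ∈ CP_n` and `X + Y ∈ F`
imply `X, Y ∈ F`. -/
def IsFaceCP (n : ℕ) (F : Set (Matrix (Fin n) (Fin n) ℝ)) : Prop :=
  (∀ X ∈ F, IsCP X) ∧
  (∀ X ∈ F, ∀ c : ℝ, 0 ≤ c → c • X ∈ F) ∧
  (∀ X ∈ F, ∀ Y ∈ F, X + Y ∈ F) ∧
  (∀ X Y : Matrix (Fin n) (Fin n) ℝ, IsCP X → IsCP Y → X + Y ∈ F → X ∈ F ∧ Y ∈ F)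

variable {n : ℕ}

lemma outer_smul (t : ℝ) (b : Fin n → ℝ) :
    vecMulVec (t • b) (t • b) = (t*t) • vecMulVec b b := by
  ext i j; simp [vecMulVec_apply]; ring

lemma outer_zero : vecMulVec (0 : Fin n → ℝ) (0 : Fin n → ℝ) = (0 : Matrix (Fin n) (Fin n) ℝ) := by
  ext i j; simp [vecMulVec_apply]

lemma isCP_zero : IsCP (0 : Matrix (Fin n) (Fin n) ℝ) :=
  ⟨0, by simp [IsCPRep], by simp [IsCPRep], ⟨[], rfl, List.Pairwise.nil⟩, by simp⟩

lemma listRep_isCP (l : List (Fin n → ℝ)) (h0 : ∀ c ∈ l, c ≠ 0)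
    (hp : l.Pairwise (fun b c => LinearIndependent ℝ ![b, c]))
    (hpos : ∀ c ∈ l, ∀ i, 0 ≤ c i) :
    IsCP (l.map fun c => vecMulVec c c).sum := by
  refine ⟨↑l, fun b hb => hpos b (Multiset.mem_coe.mp hb),
    fun b hb => h0 b (Multiset.mem_coe.mp hb), ⟨l, rfl, hp⟩, ?_⟩
  rw [Multiset.map_coe, Multiset.sum_coe]

/-- key merging lemma -/
lemma addOne : ∀ N : ℕ, ∀ l : List (Fin n → ℝ), ∀ b : Fin n → ℝ,
    l.length ≤ N → (∀ c ∈ l, ∀ i, 0 ≤ c i) → (∀ c ∈ l, c ≠ 0) →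
    l.Pairwise (fun b c => LinearIndependent ℝ ![b, c]) → (∀ i, 0 ≤ b i) →
    IsCP (vecMulVec b b + (l.map fun c => vecMulVec c c).sum) := by
  intro N
  induction N with
  | zero =>
    intro l b hlen _ _ _ hb
    rw [List.length_eq_zero_iff.mp (Nat.le_zero.mp hlen)]
    by_cases hb0 : b = 0
    · subst hb0; simpa [outer_zero] using isCP_zero
    · simpa using listRep_isCP [b] (by simpa using hb0) (by simp) (by simpa using hb)
  | succ N ih =>
    intro l b hlen hpos h0 hp hb
    by_cases hb0 : b = 0
    · subst hb0
      have : IsCP (l.map fun c => vecMulVec c c).sum := listRep_isCP l h0 hp hpos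
      simpa [outer_zero] using this
    by_cases hdep : ∃ c ∈ l, ¬ LinearIndependent ℝ ![b, c]
    · obtain ⟨c, hcl, hcd⟩ := hdep
      have hc0 : c ≠ 0 := h0 c hcl
      -- get a with a • c = b
      have : ∃ a : ℝ, a • c = b := by
        by_contra hcon
        push_neg at hcon
        exact hcd (linearIndependent_fin2.mpr ⟨by simpa using hc0, by simpa using hcon⟩)
      obtain ⟨a, ha⟩ := this
      have ha0 : 0 < a := by
        obtain ⟨i, hi⟩ : ∃ i, c i ≠ 0 := by
          by_contra hcon; push_neg at hcon; exact hc0 (funext hcon)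
        have hci : 0 < c i := lt_of_le_of_ne (hpos c hcl i) (Ne.symm hi)
        have han : a ≠ 0 := by rintro rfl; simp at ha; exact hb0 ha.symm
        have : 0 ≤ a * c i := by rw [show a * c i = b i by rw [← ha]; simp]; exact hb i
        rcases lt_or_gt_of_ne han with h | h
        · nlinarith
        · exact h
      set b' : Fin n → ℝ := Real.sqrt (a*a+1) • c with hb'
      have hmerge : vecMulVec b b + vecMulVec c c = vecMulVec b' b' := by
        rw [← ha, outer_smul, hb', outer_smul,
          Real.mul_self_sqrt (by nlinarith), add_smul, one_smul]
      set l' := l.erase c with hl'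
      have hperm : l.Perm (c :: l') := List.perm_cons_erase hcl
      have hsub : l'.Sublist l := List.erase_sublist
      have hsum : (l.map fun c => vecMulVec c c).sum
          = vecMulVec c c + (l'.map fun c => vecMulVec c c).sum := by
        rw [(hperm.map _).sum_eq]; simp
      have := ih l' b' (by
          rw [hl', List.length_erase_of_mem hcl]
          have h2 : 0 < l.length := List.length_pos_iff.mpr (List.ne_nil_of_mem hcl)
          omega)
        (fun d hd => hpos d (hsub.mem hd)) (fun d hd => h0 d (hsub.mem hd))
        (hp.sublist hsub)
        (fun i => mul_nonneg (Real.sqrt_nonneg _) (hpos c hcl i))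
      rw [hsum, ← add_assoc, hmerge]
      exact this
    · push_neg at hdep
      have := listRep_isCP (b :: l) (by
          intro d hd; rcases List.mem_cons.mp hd with h | h
          · subst h; exact hb0
          · exact h0 d h)
        (List.Pairwise.cons hdep hp)
        (by
          intro d hd; rcases List.mem_cons.mp hd with h | h
          · subst h; exact hb
          · exact hpos d h)
      simpa using this

lemma rep_to_list {S : Matrix (Fin n) (Fin n) ℝ} (h : IsCP S) :
    ∃ l : List (Fin n → ℝ), (∀ c ∈ l, ∀ i, 0 ≤ c i) ∧ (∀ c ∈ l, c ≠ 0) ∧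
      l.Pairwise (fun b c => LinearIndependent ℝ ![b, c]) ∧
      (l.map fun c => vecMulVec c c).sum = S := by
  obtain ⟨L, hpos, h0, ⟨l, hl, hp⟩, hsum⟩ := h
  subst hl
  refine ⟨l, fun c hc => hpos c (Multiset.mem_coe.mpr hc),
    fun c hc => h0 c (Multiset.mem_coe.mpr hc), hp, ?_⟩
  rw [Multiset.map_coe, Multiset.sum_coe] at hsum; exact hsum

lemma isCP_addOuter {S : Matrix (Fin n) (Fin n) ℝ} (hS : IsCP S) {b : Fin n → ℝ}
    (hb : ∀ i, 0 ≤ b i) : IsCP (vecMulVec b b + S) := by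
  obtain ⟨l, hpos, h0, hp, hsum⟩ := rep_to_list hS
  rw [← hsum]
  exact addOne l.length l b le_rfl hpos h0 hp hb

lemma sumList (l : List (Fin n → ℝ)) (hpos : ∀ c ∈ l, ∀ i, 0 ≤ c i) :
    IsCP (l.map fun c => vecMulVec c c).sum := by
  induction l with
  | nil => simpa using isCP_zero
  | cons c t ih =>
    simp only [List.map_cons, List.sum_cons]
    exact isCP_addOuter (ih fun d hd => hpos d (List.mem_cons_of_mem c hd))
      (hpos c (List.mem_cons_self))

lemma isCP_add {X Y : Matrix (Fin n) (Fin n) ℝ} (hX : IsCP X) (hY : IsCP Y) :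
    IsCP (X + Y) := by
  obtain ⟨l, hpos, -, -, hsum⟩ := rep_to_list hY
  rw [← hsum]
  clear hsum
  induction l with
  | nil => simpa using hX
  | cons c t ih =>
    have h1 : X + ((c :: t).map fun c => vecMulVec c c).sum
        = vecMulVec c c + (X + (t.map fun c => vecMulVec c c).sum) := by
      simp only [List.map_cons, List.sum_cons]; abel
    rw [h1]
    exact isCP_addOuter (ih fun d hd => hpos d (List.mem_cons_of_mem c hd))
      (hpos c (List.mem_cons_self))

lemma isCP_smul {X : Matrix (Fin n) (Fin n) ℝ} (hX : IsCP X) {t : ℝ} (ht : 0 ≤ t) :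
    IsCP (t • X) := by
  obtain ⟨l, hpos, -, -, hsum⟩ := rep_to_list hX
  have : t • X = ((l.map fun c => Real.sqrt t • c).map fun c => vecMulVec c c).sum := by
    rw [← hsum, List.smul_sum, List.map_map, List.map_map]
    congr 1
    apply List.map_congr_left
    intro c _
    simp only [Function.comp_apply, outer_smul, Real.mul_self_sqrt ht]
  rw [this]
  exact sumList _ (by
    intro d hd
    obtain ⟨c, hc, rfl⟩ := List.mem_map.mp hd
    exact fun i => mul_nonneg (Real.sqrt_nonneg _) (hpos c hc i))

lemma isCP_entry {X : Matrix (Fin n) (Fin n) ℝ} (hX : IsCP X) (i j : Fin n) :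
    0 ≤ X i j := by
  obtain ⟨l, hpos, -, -, hsum⟩ := rep_to_list hX
  rw [← hsum]
  clear hsum
  induction l with
  | nil => simp
  | cons c t ih =>
    simp only [List.map_cons, List.sum_cons, Matrix.add_apply, vecMulVec_apply]
    have := ih fun d hd => hpos d (List.mem_cons_of_mem c hd)
    have hc := hpos c (List.mem_cons_self)
    exact add_nonneg (mul_nonneg (hc i) (hc j)) this

lemma sum_map_get {M : Type*} [AddCommMonoid M] {α : Type*} (l : List α) (f : α → M) :
    (l.map f).sum = ∑ i : Fin l.length, f (l.get i) := by
  induction l with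
  | nil => simp
  | cons a t ih =>
    rw [List.map_cons, List.sum_cons, ih]
    exact (Fin.sum_univ_succ (f := fun i : Fin (t.length + 1) => f ((a :: t).get i))).symm

def rhs (n : ℕ) (A : Matrix (Fin n) (Fin n) ℝ) : Set (Matrix (Fin n) (Fin n) ℝ) :=
  {X | ∃ (k : ℕ) (c : Fin k → ℝ) (b : Fin k → (Fin n → ℝ)),
    (∀ i, 0 ≤ c i) ∧ (∀ i, ∀ l, 0 ≤ b i l) ∧
    (∀ i, IsCP (A - vecMulVec (b i) (b i))) ∧
    X = ∑ i, c i • vecMulVec (b i) (b i)}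

lemma sub_outer_isCP {A : Matrix (Fin n) (Fin n) ℝ} {l : List (Fin n → ℝ)}
    (hpos : ∀ c ∈ l, ∀ i, 0 ≤ c i)
    (hsum : (l.map fun c => vecMulVec c c).sum = A) {d : Fin n → ℝ} (hd : d ∈ l) :
    IsCP (A - vecMulVec d d) := by
  have hperm : l.Perm (d :: l.erase d) := List.perm_cons_erase hd
  have h1 : A = vecMulVec d d + ((l.erase d).map fun c => vecMulVec c c).sum := by
    rw [← hsum, (hperm.map _).sum_eq]; simp
  have h2 : A - vecMulVec d d = ((l.erase d).map fun c => vecMulVec c c).sum := by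
    rw [h1]; abel
  rw [h2]
  exact sumList _ (fun c hc => hpos c ((List.erase_sublist : (l.erase d).Sublist l).mem hc))

lemma mem_rhs_self {A : Matrix (Fin n) (Fin n) ℝ} (hA : IsCP A) : A ∈ rhs n A := by
  obtain ⟨l, hpos, -, -, hsum⟩ := rep_to_list hA
  refine ⟨l.length, fun _ => 1, fun i => l.get i, fun _ => zero_le_one,
    fun i j => hpos _ (l.get_mem i) j,
    fun i => sub_outer_isCP hpos hsum (l.get_mem i), ?_⟩
  simp only [one_smul]
  rw [← sum_map_get l (fun c => vecMulVec c c), hsum]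

lemma rhs_isCP {A X : Matrix (Fin n) (Fin n) ℝ} (hX : X ∈ rhs n A) : IsCP X := by
  obtain ⟨k, c, b, hc, hb, -, rfl⟩ := hX
  have : ∑ i, c i • vecMulVec (b i) (b i)
      = ((List.ofFn fun i => Real.sqrt (c i) • b i).map fun d => vecMulVec d d).sum := by
    rw [List.map_ofFn, List.sum_ofFn]
    apply Finset.sum_congr rfl
    intro i _
    simp only [Function.comp_apply, outer_smul, Real.mul_self_sqrt (hc i)]
  rw [this]
  refine sumList _ ?_
  intro d hd
  obtain ⟨i, rfl⟩ := List.mem_ofFn.mp hd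
  exact fun j => mul_nonneg (Real.sqrt_nonneg _) (hb i j)

lemma rhs_smul {A X : Matrix (Fin n) (Fin n) ℝ} (hX : X ∈ rhs n A) {t : ℝ} (ht : 0 ≤ t) :
    t • X ∈ rhs n A := by
  obtain ⟨k, c, b, hc, hb, hcp, rfl⟩ := hX
  refine ⟨k, fun i => t * c i, b, fun i => mul_nonneg ht (hc i), hb, hcp, ?_⟩
  rw [Finset.smul_sum]
  apply Finset.sum_congr rfl
  intro i _
  rw [smul_smul]

lemma rhs_add {A X Y : Matrix (Fin n) (Fin n) ℝ} (hX : X ∈ rhs n A) (hY : Y ∈ rhs n A) :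
    X + Y ∈ rhs n A := by
  obtain ⟨k, c, b, hc, hb, hcp, rfl⟩ := hX
  obtain ⟨k', c', b', hc', hb', hcp', rfl⟩ := hY
  refine ⟨k + k', fun i => Fin.addCases (motive := fun _ => ℝ) c c' i,
    fun i => Fin.addCases (motive := fun _ => Fin n → ℝ) b b' i, ?_, ?_, ?_, ?_⟩
  · intro i
    refine Fin.addCases ?_ ?_ i
    · intro j; simp only [Fin.addCases_left]; exact hc j
    · intro j; simp only [Fin.addCases_right]; exact hc' j
  · intro i
    refine Fin.addCases ?_ ?_ i
    · intro j; simp only [Fin.addCases_left]; exact hb j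
    · intro j; simp only [Fin.addCases_right]; exact hb' j
  · intro i
    refine Fin.addCases ?_ ?_ i
    · intro j; simp only [Fin.addCases_left]; exact hcp j
    · intro j; simp only [Fin.addCases_right]; exact hcp' j
  · rw [Fin.sum_univ_add]
    congr 1
    · apply Finset.sum_congr rfl; intro j _; simp only [Fin.addCases_left]
    · apply Finset.sum_congr rfl; intro j _; simp only [Fin.addCases_right]

lemma rhs_zero (A : Matrix (Fin n) (Fin n) ℝ) : (0 : Matrix (Fin n) (Fin n) ℝ) ∈ rhs n A :=
  ⟨0, Fin.elim0, Fin.elim0, fun i => i.elim0, fun i => i.elim0, fun i => i.elim0, by simp⟩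

lemma rhs_face {A X Y : Matrix (Fin n) (Fin n) ℝ} (hX : IsCP X) (hY : IsCP Y)
    (hmem : X + Y ∈ rhs n A) : X ∈ rhs n A := by
  obtain ⟨k, c, b, hc, hb, hcp, hsum⟩ := hmem
  set C : ℝ := ∑ i, c i with hC
  have hC0 : 0 ≤ C := Finset.sum_nonneg fun i _ => hc i
  rcases eq_or_lt_of_le hC0 with hCz | hCpos
  · -- C = 0, so X + Y = 0, so X = 0
    have hall : ∀ i ∈ Finset.univ, c i = 0 :=
      (Finset.sum_eq_zero_iff_of_nonneg fun i _ => hc i).mp hCz.symm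
    have hXY : X + Y = 0 := by
      rw [hsum]
      exact Finset.sum_eq_zero fun i hi => by rw [hall i hi, zero_smul]
    have hX0 : X = 0 := by
      ext i j
      have h1 := isCP_entry hX i j
      have h2 := isCP_entry hY i j
      have h3 : X i j + Y i j = 0 := by
        have := congrFun (congrFun hXY i) j
        simpa using this
      simp only [Matrix.zero_apply]
      linarith
    rw [hX0]; exact rhs_zero A
  · -- C > 0
    have hCne : C ≠ 0 := ne_of_gt hCpos
    have hACP : IsCP (A - C⁻¹ • (X + Y)) := by
      have key : A - C⁻¹ • (X + Y)
          = ∑ i, (c i / C) • (A - vecMulVec (b i) (b i)) := by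
        have h1 : ∑ i, (c i / C) • (A - vecMulVec (b i) (b i))
            = (∑ i, c i / C) • A - C⁻¹ • ∑ i, c i • vecMulVec (b i) (b i) := by
          simp only [smul_sub]
          rw [Finset.sum_sub_distrib, Finset.sum_smul, Finset.smul_sum]
          congr 1
          apply Finset.sum_congr rfl
          intro i _
          rw [smul_smul, div_eq_inv_mul]
        rw [h1, ← Finset.sum_div, ← hC, div_self hCne, one_smul, hsum]
      rw [key]
      refine Finset.sum_induction _ IsCP (fun a b => isCP_add) isCP_zero ?_
      intro i _
      exact isCP_smul (hcp i) (div_nonneg (hc i) hC0)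
    obtain ⟨l, hpos, -, -, hXsum⟩ := rep_to_list hX
    refine ⟨l.length, fun _ => C, fun i => Real.sqrt C⁻¹ • l.get i, fun _ => hC0,
      fun i j => mul_nonneg (Real.sqrt_nonneg _) (hpos _ (l.get_mem i) j), ?_, ?_⟩
    · intro i
      have houter : vecMulVec (Real.sqrt C⁻¹ • l.get i) (Real.sqrt C⁻¹ • l.get i)
          = C⁻¹ • vecMulVec (l.get i) (l.get i) := by
        rw [outer_smul, Real.mul_self_sqrt (inv_nonneg.mpr hC0)]
      rw [houter]
      have hXD : IsCP (X - vecMulVec (l.get i) (l.get i)) :=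
        sub_outer_isCP hpos hXsum (l.get_mem i)
      have halg : A - C⁻¹ • vecMulVec (l.get i) (l.get i)
          = (A - C⁻¹ • (X + Y)) + C⁻¹ • Y + C⁻¹ • (X - vecMulVec (l.get i) (l.get i)) := by
        module
      rw [halg]
      exact isCP_add (isCP_add hACP (isCP_smul hY (inv_nonneg.mpr hC0)))
        (isCP_smul hXD (inv_nonneg.mpr hC0))
    · have : ∀ i : Fin l.length,
          C • vecMulVec (Real.sqrt C⁻¹ • l.get i) (Real.sqrt C⁻¹ • l.get i)
          = vecMulVec (l.get i) (l.get i) := by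
        intro i
        rw [outer_smul, Real.mul_self_sqrt (inv_nonneg.mpr hC0), smul_smul,
          mul_inv_cancel₀ hCne, one_smul]
      rw [Finset.sum_congr rfl fun i _ => this i, ← sum_map_get l (fun d => vecMulVec d d),
        hXsum]

/-- The minimal face of `CP_n` containing a completely positive `A` is the conical hull
of `{ bbᵀ : b ≥ 0, A - bbᵀ ∈ CP_n }`. -/
theorem stmt_18 (n : ℕ) (A : Matrix (Fin n) (Fin n) ℝ) (hA : IsCP A) :
    ⋂₀ {F | IsFaceCP n F ∧ A ∈ F} =
      {X | ∃ (k : ℕ) (c : Fin k → ℝ) (b : Fin k → (Fin n → ℝ)),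
        (∀ i, 0 ≤ c i) ∧ (∀ i, ∀ l, 0 ≤ b i l) ∧
        (∀ i, IsCP (A - vecMulVec (b i) (b i))) ∧
        X = ∑ i, c i • vecMulVec (b i) (b i)} := by
  have hface : IsFaceCP n (rhs n A) :=
    ⟨fun X hX => rhs_isCP hX,
     fun X hX c hc => rhs_smul hX hc,
     fun X hX Y hY => rhs_add hX hY,
     fun X Y hX hY hmem => ⟨rhs_face hX hY hmem, rhs_face hY hX (by rwa [add_comm])⟩⟩
  apply Set.eq_of_subset_of_subset
  · intro X hX
    exact hX (rhs n A) ⟨hface, mem_rhs_self hA⟩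
  · intro X hX F hF
    obtain ⟨⟨hF1, hF2, hF3, hF4⟩, hAF⟩ := hF
    obtain ⟨k, c, b, hc, hb, hACP, rfl⟩ := hX
    refine Finset.sum_induction _ (· ∈ F) (fun a b ha hb => hF3 a ha b hb) ?_ ?_
    · have h0 := hF2 A hAF 0 le_rfl
      rwa [zero_smul] at h0
    · intro i _
      have hbcp : IsCP (vecMulVec (b i) (b i)) := by
        have := sumList [b i] (by intro d hd; simp at hd; subst hd; exact hb i)
        simpa using this
      have hmem : vecMulVec (b i) (b i) ∈ F := by
        refine (hF4 _ _ hbcp (hACP i) ?_).1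
        have heq : vecMulVec (b i) (b i) + (A - vecMulVec (b i) (b i)) = A := by abel
        rw [heq]; exact hAF
      exact hF2 _ hmem (c i) (hc i)
end
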